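/- arXiv:2107.12439 — 4 statements merged into one kernel-verified Lean document; each statement's English description precedes it below -/
import Mathlib

section
/- Let w ∈ [0,1] and let z be a real number with z > 0. Then the equation cosh u − cosh(w·u) = z has no solution u in the closed-left-open-top half-strip {u ∈ ℂ : Re(u) ≥ 0 and 0 < Im(u) < π}. -/
open Complex

lemma sinh_im_pos' {v : ℂ} (h1 : 0 < v.im) (h2 : v.im < Real.pi) :
    0 < (Complex.sinh v).im := by
  have hs : 0 < Real.sin v.im := Real.sin_pos_of_pos_of_lt_pi h1 h2
  have him : (Complex.sinh v).im = Real.sin v.im * ((Real.exp v.re + Real.exp (-v.re)) / 2) := by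
    simp only [Complex.sinh, Complex.div_im, Complex.sub_im, Complex.exp_im,
      Complex.neg_im, Complex.neg_re, Complex.sub_re, Complex.exp_re]
    norm_num
    ring
  rw [him]
  positivity

lemma no_pos_real_prod {a b : ℂ} (ha : 0 < a.im) (hb : 0 < b.im)
    (him : (a * b).im = 0) (hre : 0 < (a * b).re) : False := by
  rw [Complex.mul_im] at him
  rw [Complex.mul_re] at hre
  nlinarith [mul_pos ha hb, sq_nonneg (a.im * b.re), sq_nonneg (a.re * b.im)]

/-- For `w ∈ [0,1]` and real `z > 0`, the equation `cosh u − cosh (w u) = z` has no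
solution `u` in the half-strip `{Re u ≥ 0, 0 < Im u < π}`. -/
theorem no_solution_in_half_strip (w : ℝ) (hw : w ∈ Set.Icc (0 : ℝ) 1)
    (z : ℝ) (hz : 0 < z) :
    ¬ ∃ u : ℂ, 0 ≤ u.re ∧ 0 < u.im ∧ u.im < Real.pi ∧
        Complex.cosh u - Complex.cosh ((w : ℂ) * u) = (z : ℂ) := by
  rintro ⟨u, hre, him0, himpi, heq⟩
  obtain ⟨hw0, hw1⟩ := hw
  by_cases hw1' : w = 1
  · subst hw1'
    simp at heq
    have : z = 0 := by exact_mod_cast heq.symm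
    linarith
  have hwlt : w < 1 := lt_of_le_of_ne hw1 hw1'
  set a : ℂ := (((1+w)/2 : ℝ) : ℂ) * u with ha
  set b : ℂ := (((1-w)/2 : ℝ) : ℂ) * u with hb
  have key : Complex.cosh u - Complex.cosh ((w : ℂ) * u) =
      2 * Complex.sinh a * Complex.sinh b := by
    have e1 : a + b = u := by rw [ha, hb]; push_cast; ring
    have e2 : a - b = (w : ℂ) * u := by rw [ha, hb]; push_cast; ring
    rw [← e2, ← e1, Complex.cosh_add, Complex.cosh_sub]
    ring
  have hap : 0 < (Complex.sinh a).im := by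
    apply sinh_im_pos'
    · rw [ha]; simp only [Complex.mul_im, Complex.ofReal_re, Complex.ofReal_im]
      norm_num
      nlinarith
    · rw [ha]; simp only [Complex.mul_im, Complex.ofReal_re, Complex.ofReal_im]
      norm_num
      calc (1+w)/2 * u.im ≤ 1 * u.im := by
            apply mul_le_mul_of_nonneg_right _ him0.le
            linarith
        _ < Real.pi := by linarith
  have hbp : 0 < (Complex.sinh b).im := by
    apply sinh_im_pos'
    · rw [hb]; simp only [Complex.mul_im, Complex.ofReal_re, Complex.ofReal_im]
      norm_num
      nlinarith
    · rw [hb]; simp only [Complex.mul_im, Complex.ofReal_re, Complex.ofReal_im]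
      norm_num
      calc (1-w)/2 * u.im ≤ 1 * u.im := by
            apply mul_le_mul_of_nonneg_right _ him0.le
            linarith
        _ < Real.pi := by linarith
  rw [key] at heq
  have heq' : Complex.sinh a * Complex.sinh b = ((z/2 : ℝ) : ℂ) := by
    push_cast
    rw [mul_comm (2:ℂ) _, mul_assoc] at heq
    field_simp at heq ⊢
    linear_combination heq
  apply no_pos_real_prod hap hbp
  · rw [heq']; simp
  · rw [heq']; simp; positivity
end

section
/- Fix σ₀ > 0. There exists a function G : ℂ → ℂ which is holomorphic on the open strip {u ∈ ℂ : |Im(u)| < π}, is odd on this strip (G(−u) = −G(u) whenever |Im(u)| < π), and satisfies G(u) = g(u) for every real u > 0. -/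
open scoped Real

/-- The SABR payoff function
`g(u) = sinh u · ∫_0^u sin((σ₀/2) sinh s) / (sinh s · √(cosh u − cosh s)) ds`. -/
noncomputable def sabrPayoff (σ₀ u : ℝ) : ℝ :=
  Real.sinh u *
    ∫ s in (0 : ℝ)..u,
      Real.sin (σ₀ / 2 * Real.sinh s) /
        (Real.sinh s * Real.sqrt (Real.cosh u - Real.cosh s))

open Complex MeasureTheory Set Metric


noncomputable def csinc : ℂ → ℂ := dslope Complex.sin 0

lemma csinc_apply {z : ℂ} (hz : z ≠ 0) : csinc z = Complex.sin z / z := by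
  simp [csinc, dslope_of_ne _ hz, slope_def_field]

lemma csinc_zero : csinc 0 = 1 := by
  simp [csinc, Complex.deriv_sin]

lemma csinc_neg (z : ℂ) : csinc (-z) = csinc z := by
  rcases eq_or_ne z 0 with rfl | hz
  · simp
  · rw [csinc_apply (neg_ne_zero.mpr hz), csinc_apply hz, Complex.sin_neg, neg_div_neg_eq]

lemma differentiable_csinc : Differentiable ℂ csinc := by
  have h : DifferentiableOn ℂ csinc univ := by
    rw [csinc, differentiableOn_dslope (by simp : univ ∈ nhds (0:ℂ))]
    exact Complex.differentiable_sin.differentiableOn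
  exact fun z => (h z (mem_univ z)).differentiableAt (by simp)

lemma analyticOnNhd_csinc : AnalyticOnNhd ℂ csinc univ :=
  fun z _ => differentiable_csinc.analyticAt z

lemma continuous_dcsinc : Continuous (deriv csinc) :=
  continuous_iff_continuousAt.mpr fun x => (analyticOnNhd_csinc.deriv x (Set.mem_univ x)).continuousAt

noncomputable def Bc (u : ℂ) (θ : ℝ) : ℂ :=
  (1 + (Real.sin θ : ℂ) ^ 2) + (Real.cos θ : ℂ) ^ 2 * Complex.cosh u

lemma cosh_re_im (x y : ℝ) :
    Complex.cosh (x + y * Complex.I) =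
      (Real.cosh x * Real.cos y : ℝ) + (Real.sinh x * Real.sin y : ℝ) * Complex.I := by
  rw [Complex.cosh_add, Complex.cosh_mul_I, Complex.sinh_mul_I]
  push_cast
  ring

lemma neg_one_lt_cos {y : ℝ} (hy : |y| < Real.pi) : -1 < Real.cos y := by
  have h2 : Real.cos y = 2 * Real.cos (y/2) ^ 2 - 1 := by
    have := Real.cos_two_mul (y/2)
    rw [show 2 * (y/2) = y by ring] at this
    linarith
  have hc : 0 < Real.cos (y/2) := by
    apply Real.cos_pos_of_mem_Ioo
    constructor
    · nlinarith [abs_lt.mp hy |>.1]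
    · nlinarith [abs_lt.mp hy |>.2]
  nlinarith

lemma Bc_eq (u : ℂ) (θ : ℝ) :
    Bc u θ = ((1 + Real.sin θ ^ 2) + Real.cos θ ^ 2 * (Real.cosh u.re * Real.cos u.im) : ℝ) +
      ((Real.cos θ ^ 2 * (Real.sinh u.re * Real.sin u.im) : ℝ)) * Complex.I := by
  conv_lhs => rw [Bc, (Complex.re_add_im u).symm]
  rw [cosh_re_im]
  push_cast
  ring

lemma re_ofReal_add_mul_I (a b : ℝ) : ((a : ℂ) + (b : ℂ) * Complex.I).re = a := by simp
lemma im_ofReal_add_mul_I (a b : ℝ) : ((a : ℂ) + (b : ℂ) * Complex.I).im = b := by simp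

lemma Bc_mem_slitPlane {u : ℂ} (hu : |u.im| < Real.pi) (θ : ℝ) :
    Bc u θ ∈ Complex.slitPlane := by
  set x := u.re
  set y := u.im
  have hre : (Bc u θ).re = (1 + Real.sin θ ^ 2) + Real.cos θ ^ 2 * (Real.cosh x * Real.cos y) := by
    rw [Bc_eq, re_ofReal_add_mul_I]
  have him : (Bc u θ).im = Real.cos θ ^ 2 * (Real.sinh x * Real.sin y) := by
    rw [Bc_eq, im_ofReal_add_mul_I]
  rw [Complex.mem_slitPlane_iff]
  rcases eq_or_ne ((Bc u θ).im) 0 with h0 | h0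
  · left
    rw [hre]
    rw [him] at h0
    have hs2 : Real.sin θ ^ 2 + Real.cos θ ^ 2 = 1 := Real.sin_sq_add_cos_sq θ
    have hcy : -1 < Real.cos y := neg_one_lt_cos hu
    have key : ∀ z : ℝ, -1 < z → 0 < (1 + Real.sin θ ^ 2) + Real.cos θ ^ 2 * z := by
      intro z hz
      rcases eq_or_ne (Real.sin θ) 0 with hs | hs
      · have hc1 : Real.cos θ ^ 2 = 1 := by rw [hs] at hs2; simpa using hs2
        rw [hs, hc1]; nlinarith
      · have hspos : 0 < Real.sin θ ^ 2 := by positivity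
        have h1 : 0 ≤ Real.cos θ ^ 2 * (1 + z) := by
          apply mul_nonneg (sq_nonneg _); linarith
        nlinarith
    rcases mul_eq_zero.mp h0 with hc2 | hxy
    · rw [hc2]; nlinarith [sq_nonneg (Real.sin θ)]
    · rcases mul_eq_zero.mp hxy with hx | hy
      · have hx0 : x = 0 := Real.sinh_eq_zero.mp hx
        rw [hx0, Real.cosh_zero]
        have := key (Real.cos y) hcy
        simpa using this
      · have hy0 : y = 0 := by
          have := abs_lt.mp hu
          exact (Real.sin_eq_zero_iff_of_lt_of_lt (by linarith) (by linarith)).mp hy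
        rw [hy0, Real.cos_zero]
        have h1 : 0 ≤ Real.cos θ ^ 2 * Real.cosh x :=
          mul_nonneg (sq_nonneg _) (Real.cosh_pos x).le
        nlinarith [Real.one_le_cosh x, sq_nonneg (Real.sin θ)]
  · right; exact h0


noncomputable def Bc' (u : ℂ) (θ : ℝ) : ℂ := (Real.cos θ : ℂ) ^ 2 * Complex.sinh u

noncomputable def Dc (u : ℂ) (θ : ℝ) : ℂ :=
  ((Real.sqrt 2 : ℝ) : ℂ) * (Real.cos θ : ℂ) * (Complex.sinh (u/2) * Bc u θ ^ (1/2 : ℂ))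

noncomputable def Dc' (u : ℂ) (θ : ℝ) : ℂ :=
  ((Real.sqrt 2 : ℝ) : ℂ) * (Real.cos θ : ℂ) *
    (Complex.cosh (u/2) * (1/2) * Bc u θ ^ (1/2 : ℂ) +
      Complex.sinh (u/2) * ((1/2 : ℂ) * Bc u θ ^ (-(1/2) : ℂ) * Bc' u θ))

noncomputable def Fc (a : ℝ) (u : ℂ) (θ : ℝ) : ℂ :=
  csinc ((a : ℂ) * Dc u θ) * Bc u θ ^ (-(1/2) : ℂ)

noncomputable def Fc' (a : ℝ) (u : ℂ) (θ : ℝ) : ℂ :=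
  deriv csinc ((a : ℂ) * Dc u θ) * ((a : ℂ) * Dc' u θ) * Bc u θ ^ (-(1/2) : ℂ) +
    csinc ((a : ℂ) * Dc u θ) * ((-(1/2) : ℂ) * Bc u θ ^ (-(3/2) : ℂ) * Bc' u θ)

lemma hasDerivAt_Bc {u : ℂ} (θ : ℝ) : HasDerivAt (fun u => Bc u θ) (Bc' u θ) u := by
  have h := (Complex.hasDerivAt_cosh u).const_mul ((Real.cos θ : ℂ) ^ 2)
  simpa [Bc, Bc'] using h

lemma hasDerivAt_cpowB {u : ℂ} (hu : |u.im| < Real.pi) (θ : ℝ) (c : ℂ) :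
    HasDerivAt (fun u => Bc u θ ^ c) (c * Bc u θ ^ (c - 1) * Bc' u θ) u :=
  (hasDerivAt_Bc θ).cpow_const (Bc_mem_slitPlane hu θ)

lemma hasDerivAt_Dc {u : ℂ} (hu : |u.im| < Real.pi) (θ : ℝ) :
    HasDerivAt (fun u => Dc u θ) (Dc' u θ) u := by
  have hs : HasDerivAt (fun u : ℂ => Complex.sinh (u/2)) (Complex.cosh (u/2) * (1/2)) u := by
    exact (Complex.hasDerivAt_sinh (u/2)).comp u ((hasDerivAt_id u).div_const 2)
  have hB : HasDerivAt (fun u => Bc u θ ^ (1/2 : ℂ))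
      ((1/2 : ℂ) * Bc u θ ^ (-(1/2) : ℂ) * Bc' u θ) u := by
    have := hasDerivAt_cpowB hu θ (1/2)
    convert this using 2
    norm_num
  have := ((hs.mul hB).const_mul (((Real.sqrt 2 : ℝ) : ℂ) * (Real.cos θ : ℂ)))
  simpa [Dc, Dc', mul_add, mul_assoc] using this

lemma hasDerivAt_Fc (a : ℝ) {u : ℂ} (hu : |u.im| < Real.pi) (θ : ℝ) :
    HasDerivAt (fun u => Fc a u θ) (Fc' a u θ) u := by
  have hD : HasDerivAt (fun u => (a : ℂ) * Dc u θ) ((a : ℂ) * Dc' u θ) u :=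
    (hasDerivAt_Dc hu θ).const_mul _
  have hcs : HasDerivAt (fun u => csinc ((a : ℂ) * Dc u θ))
      (deriv csinc ((a : ℂ) * Dc u θ) * ((a : ℂ) * Dc' u θ)) u :=
    (differentiable_csinc _).hasDerivAt.comp u hD
  have hBm : HasDerivAt (fun u => Bc u θ ^ (-(1/2) : ℂ))
      ((-(1/2) : ℂ) * Bc u θ ^ (-(3/2) : ℂ) * Bc' u θ) u := by
    have := hasDerivAt_cpowB hu θ (-(1/2))
    convert this using 2
    norm_num
  exact hcs.mul hBm


-- continuity
lemma continuous_Bc2 : Continuous (fun p : ℂ × ℝ => Bc p.1 p.2) := by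
  unfold Bc
  continuity

lemma continuous_Bc'2 : Continuous (fun p : ℂ × ℝ => Bc' p.1 p.2) := by
  unfold Bc'
  continuity

lemma continuousAt_cpow_Bc (c : ℂ) {p : ℂ × ℝ} (hp : |p.1.im| < Real.pi) :
    ContinuousAt (fun p : ℂ × ℝ => Bc p.1 p.2 ^ c) p :=
 by
  have h1 : ContinuousAt (fun z : ℂ => z ^ c) (Bc p.1 p.2) :=
    continuousAt_cpow_const (Bc_mem_slitPlane hp p.2)
  show ContinuousAt ((fun z : ℂ => z ^ c) ∘ (fun p : ℂ × ℝ => Bc p.1 p.2)) p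
  exact ContinuousAt.comp (x := p) h1 continuous_Bc2.continuousAt

lemma continuousAt_Dc2 {p : ℂ × ℝ} (hp : |p.1.im| < Real.pi) :
    ContinuousAt (fun p : ℂ × ℝ => Dc p.1 p.2) p := by
  unfold Dc
  exact (continuous_const.mul
      (Complex.continuous_ofReal.comp (Real.continuous_cos.comp continuous_snd))).continuousAt.mul
    (((Complex.continuous_sinh.comp (continuous_fst.div_const 2)).continuousAt).mul
      (continuousAt_cpow_Bc (1/2) hp))

lemma continuousAt_Dc'2 {p : ℂ × ℝ} (hp : |p.1.im| < Real.pi) :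
    ContinuousAt (fun p : ℂ × ℝ => Dc' p.1 p.2) p := by
  unfold Dc'
  refine (continuous_const.mul
      (Complex.continuous_ofReal.comp (Real.continuous_cos.comp continuous_snd))).continuousAt.mul
    (ContinuousAt.add ?_ ?_)
  · exact ((Complex.continuous_cosh.comp (continuous_fst.div_const 2)).continuousAt.mul
      continuousAt_const).mul (continuousAt_cpow_Bc (1/2) hp)
  · exact (Complex.continuous_sinh.comp (continuous_fst.div_const 2)).continuousAt.mul
      ((continuousAt_const.mul (continuousAt_cpow_Bc (-(1/2)) hp)).mul
        continuous_Bc'2.continuousAt)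

lemma continuousAt_Fc2 (a : ℝ) {p : ℂ × ℝ} (hp : |p.1.im| < Real.pi) :
    ContinuousAt (fun p : ℂ × ℝ => Fc a p.1 p.2) p := by
  unfold Fc
  exact (differentiable_csinc.continuous.continuousAt.comp
      (continuousAt_const.mul (continuousAt_Dc2 hp))).mul (continuousAt_cpow_Bc (-(1/2)) hp)

lemma continuousAt_Fc'2 (a : ℝ) {p : ℂ × ℝ} (hp : |p.1.im| < Real.pi) :
    ContinuousAt (fun p : ℂ × ℝ => Fc' a p.1 p.2) p := by
  unfold Fc'
  refine ContinuousAt.add ?_ ?_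
  · exact ((continuous_dcsinc.continuousAt.comp
        (continuousAt_const.mul (continuousAt_Dc2 hp))).mul
      (continuousAt_const.mul (continuousAt_Dc'2 hp))).mul (continuousAt_cpow_Bc (-(1/2)) hp)
  · exact (differentiable_csinc.continuous.continuousAt.comp
        (continuousAt_const.mul (continuousAt_Dc2 hp))).mul
      ((continuousAt_const.mul (continuousAt_cpow_Bc (-(3/2)) hp)).mul
        continuous_Bc'2.continuousAt)

lemma continuous_Fc_theta (a : ℝ) {u : ℂ} (hu : |u.im| < Real.pi) :
    Continuous (fun θ => Fc a u θ) := by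
  refine continuous_iff_continuousAt.mpr fun θ => ?_
  exact (continuousAt_Fc2 a (p := (u, θ)) hu).comp
    ((Continuous.prodMk continuous_const continuous_id).continuousAt)

lemma continuous_Fc'_theta (a : ℝ) {u : ℂ} (hu : |u.im| < Real.pi) :
    Continuous (fun θ => Fc' a u θ) := by
  refine continuous_iff_continuousAt.mpr fun θ => ?_
  exact (continuousAt_Fc'2 a (p := (u, θ)) hu).comp
    ((Continuous.prodMk continuous_const continuous_id).continuousAt)

lemma mem_strip_of_closedBall {u₀ : ℂ} (hu₀ : |u₀.im| < Real.pi) {ε : ℝ}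
    (hε : ε = (Real.pi - |u₀.im|) / 2) :
    ∀ u ∈ closedBall u₀ ε, |u.im| < Real.pi := by
  intro u hu
  have h1 : |u.im - u₀.im| ≤ ‖u - u₀‖ := by
    simpa using Complex.abs_im_le_norm (u - u₀)
  have h2 : ‖u - u₀‖ ≤ ε := by
    rw [mem_closedBall, Complex.dist_eq] at hu
    exact hu
  have := abs_sub_abs_le_abs_sub u.im u₀.im
  have h3 : |u.im| ≤ |u₀.im| + ε := by
    have := abs_sub u.im u₀.im
    calc |u.im| ≤ |u₀.im| + |u.im - u₀.im| := by
          have := abs_add_le u₀.im (u.im - u₀.im); simpa [add_sub_cancel] using this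
      _ ≤ |u₀.im| + ε := by linarith
  rw [hε] at h3
  linarith

lemma hasDerivAt_intFc (a : ℝ) {u₀ : ℂ} (hu₀ : |u₀.im| < Real.pi) :
    HasDerivAt (fun u => ∫ θ in Ioc (0:ℝ) (Real.pi/2), Fc a u θ)
      (∫ θ in Ioc (0:ℝ) (Real.pi/2), Fc' a u₀ θ) u₀ := by
  set ε : ℝ := (Real.pi - |u₀.im|) / 2 with hεdef
  have hε : 0 < ε := by
    have := abs_nonneg u₀.im
    simp only [hεdef]
    linarith
  have hball := mem_strip_of_closedBall hu₀ hεdef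
  -- bound
  have hK : IsCompact (closedBall u₀ ε ×ˢ Icc (0:ℝ) (Real.pi/2)) :=
    (isCompact_closedBall u₀ ε).prod isCompact_Icc
  have hcont : ContinuousOn (fun p : ℂ × ℝ => Fc' a p.1 p.2)
      (closedBall u₀ ε ×ˢ Icc (0:ℝ) (Real.pi/2)) := by
    intro p hp
    exact (continuousAt_Fc'2 a (hball p.1 hp.1)).continuousWithinAt
  obtain ⟨C, hC⟩ := hK.exists_bound_of_continuousOn hcont
  have main := hasDerivAt_integral_of_dominated_loc_of_deriv_le (F := fun u θ => Fc a u θ)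
    (F' := fun u θ => Fc' a u θ) (μ := volume.restrict (Ioc (0:ℝ) (Real.pi/2)))
    (x₀ := u₀) (bound := fun _ => C) (ball_mem_nhds u₀ hε) ?_ ?_ ?_ ?_ ?_ ?_
  · exact main.2
  · filter_upwards [Metric.closedBall_mem_nhds u₀ hε] with u hu
    exact (continuous_Fc_theta a (hball u hu)).aestronglyMeasurable
  · exact ((continuous_Fc_theta a hu₀).integrableOn_Icc).mono_set Ioc_subset_Icc_self
  · exact (continuous_Fc'_theta a hu₀).aestronglyMeasurable
  · refine (ae_restrict_iff' measurableSet_Ioc).mpr (Filter.Eventually.of_forall ?_)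
    intro θ hθ u hu
    exact hC ⟨u, θ⟩ ⟨ball_subset_closedBall hu, Ioc_subset_Icc_self hθ⟩
  · exact (integrableOn_const_iff (C := C)).mpr (Or.inr (by simp [measure_Ioc_lt_top]))
  · refine Filter.Eventually.of_forall fun θ => fun u hu => ?_
    exact hasDerivAt_Fc a (hball u (ball_subset_closedBall hu)) θ

noncomputable def Gc (a : ℝ) (u : ℂ) : ℂ :=
  2 * (a : ℂ) * Complex.sinh u * ∫ θ in (0:ℝ)..(Real.pi/2), Fc a u θ

lemma differentiableOn_Gc (a : ℝ) :
    DifferentiableOn ℂ (Gc a) {u : ℂ | |u.im| < Real.pi} := by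
  intro u hu
  have h1 : (fun u => ∫ θ in (0:ℝ)..(Real.pi/2), Fc a u θ) =
      fun u => ∫ θ in Ioc (0:ℝ) (Real.pi/2), Fc a u θ := by
    funext v
    exact intervalIntegral.integral_of_le (by positivity)
  have h2 : DifferentiableAt ℂ (fun u => ∫ θ in (0:ℝ)..(Real.pi/2), Fc a u θ) u := by
    rw [h1]
    exact (hasDerivAt_intFc a hu).differentiableAt
  have : DifferentiableAt ℂ (Gc a) u := by
    unfold Gc
    exact ((differentiableAt_const _).mul Complex.differentiable_sinh.differentiableAt).mul h2
  exact this.differentiableWithinAt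

section RealSide
variable {u : ℝ}

-- abbreviations (u fixed, c = cosh u - 1)
noncomputable def Brr (c θ : ℝ) : ℝ := 2 + c * Real.cos θ ^ 2
noncomputable def wr (c θ : ℝ) : ℝ := Real.sqrt c * (Real.cos θ * Real.sqrt (Brr c θ))
noncomputable def wr' (c θ : ℝ) : ℝ :=
  Real.sqrt c * (-Real.sin θ * Real.sqrt (Brr c θ) +
    Real.cos θ * (c * (2 * Real.cos θ ^ 1 * -Real.sin θ) / (2 * Real.sqrt (Brr c θ))))
noncomputable def phi (c θ : ℝ) : ℝ := Real.arsinh (wr c θ)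
noncomputable def phi' (c θ : ℝ) : ℝ := (Real.sqrt (1 + wr c θ ^ 2))⁻¹ * wr' c θ

lemma Brr_pos {c : ℝ} (hc : 0 < c) (θ : ℝ) : 0 < Brr c θ := by
  have : 0 ≤ c * Real.cos θ ^ 2 := by positivity
  simp only [Brr]; linarith

lemma wr_sq {c : ℝ} (hc : 0 < c) (θ : ℝ) :
    wr c θ ^ 2 = c * Real.cos θ ^ 2 * Brr c θ := by
  have h1 : Real.sqrt c ^ 2 = c := Real.sq_sqrt hc.le
  have h2 : Real.sqrt (Brr c θ) ^ 2 = Brr c θ := Real.sq_sqrt (Brr_pos hc θ).le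
  rw [wr, mul_pow, mul_pow, h1, h2]; ring

lemma one_add_wr_sq {c : ℝ} (hc : 0 < c) (θ : ℝ) :
    1 + wr c θ ^ 2 = (1 + c * Real.cos θ ^ 2) ^ 2 := by
  rw [wr_sq hc, Brr]; ring

lemma cosh_phi {c : ℝ} (hc : 0 < c) (θ : ℝ) :
    Real.cosh (phi c θ) = 1 + c * Real.cos θ ^ 2 := by
  rw [phi, Real.cosh_arsinh, one_add_wr_sq hc]
  exact Real.sqrt_sq (by positivity)

lemma sinh_phi (c θ : ℝ) : Real.sinh (phi c θ) = wr c θ := Real.sinh_arsinh _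

lemma hasDerivAt_phi {c : ℝ} (hc : 0 < c) (θ : ℝ) :
    HasDerivAt (fun θ => phi c θ) (phi' c θ) θ := by
  have hBr : HasDerivAt (fun θ => Brr c θ)
      (c * (2 * Real.cos θ ^ 1 * -Real.sin θ)) θ := by
    have := ((Real.hasDerivAt_cos θ).pow 2).const_mul c
    simpa [Brr] using ((((Real.hasDerivAt_cos θ).pow 2).const_mul c).const_add 2)
  have hsB : HasDerivAt (fun θ => Real.sqrt (Brr c θ))
      (c * (2 * Real.cos θ ^ 1 * -Real.sin θ) / (2 * Real.sqrt (Brr c θ))) θ :=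
    hBr.sqrt (Brr_pos hc θ).ne'
  have hw : HasDerivAt (fun θ => wr c θ) (wr' c θ) θ := by
    have := ((Real.hasDerivAt_cos θ).mul hsB).const_mul (Real.sqrt c)
    simpa [wr, wr'] using this
  have := hw.arsinh
  simpa [phi, phi', smul_eq_mul] using this

lemma phi'_eq {c : ℝ} (hc : 0 < c) (θ : ℝ) :
    phi' c θ = -(2 * Real.sqrt c * Real.sin θ / Real.sqrt (Brr c θ)) := by
  have hB := Brr_pos hc θ
  have hsB : 0 < Real.sqrt (Brr c θ) := Real.sqrt_pos.mpr hB
  have hsB2 : Real.sqrt (Brr c θ) ^ 2 = Brr c θ := Real.sq_sqrt hB.le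
  have hP : (0:ℝ) < 1 + c * Real.cos θ ^ 2 := by positivity
  have h1 : Real.sqrt (1 + wr c θ ^ 2) = 1 + c * Real.cos θ ^ 2 := by
    rw [one_add_wr_sq hc]; exact Real.sqrt_sq hP.le
  rw [phi', h1, wr']
  rw [Brr] at hsB2 ⊢
  field_simp
  linear_combination (-Real.sin θ) * hsB2
end RealSide

section Match
variable {u : ℝ}

lemma injOn_phi {c : ℝ} (hc : 0 < c) : InjOn (phi c) (Ioo 0 (π/2)) := by
  intro θ₁ h₁ θ₂ h₂ heq
  have hch : Real.cosh (phi c θ₁) = Real.cosh (phi c θ₂) := by rw [heq]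
  rw [cosh_phi hc, cosh_phi hc] at hch
  have hco : Real.cos θ₁ ^ 2 = Real.cos θ₂ ^ 2 := by
    have := mul_left_cancel₀ hc.ne' (by linarith : c * Real.cos θ₁ ^ 2 = c * Real.cos θ₂ ^ 2)
    exact this
  have hc1 : 0 < Real.cos θ₁ := Real.cos_pos_of_mem_Ioo ⟨by linarith [h₁.1, Real.pi_pos], h₁.2⟩
  have hc2 : 0 < Real.cos θ₂ := Real.cos_pos_of_mem_Ioo ⟨by linarith [h₂.1, Real.pi_pos], h₂.2⟩
  have : Real.cos θ₁ = Real.cos θ₂ := by nlinarith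
  exact Real.injOn_cos ⟨h₁.1.le, by linarith [h₁.2, Real.pi_pos]⟩
    ⟨h₂.1.le, by linarith [h₂.2, Real.pi_pos]⟩ this

lemma sinh_sq_eq (hu : 0 < u) : Real.sinh u ^ 2 = (Real.cosh u - 1) * (2 + (Real.cosh u - 1)) := by
  have := Real.cosh_sq_sub_sinh_sq u
  ring_nf
  nlinarith [this]

lemma image_phi (hu : 0 < u) :
    phi (Real.cosh u - 1) '' Ioo 0 (π/2) = Ioo 0 u := by
  set c := Real.cosh u - 1 with hcdef
  have hc : 0 < c := by
    have := Real.one_lt_cosh.mpr hu.ne'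
    simp only [hcdef]; linarith
  have hsu : 0 < Real.sinh u := Real.sinh_pos_iff.mpr hu
  ext s
  constructor
  · rintro ⟨θ, hθ, rfl⟩
    have hS : 0 < Real.sin θ := Real.sin_pos_of_pos_of_lt_pi hθ.1 (by linarith [hθ.2, Real.pi_pos])
    have hCO : 0 < Real.cos θ := Real.cos_pos_of_mem_Ioo ⟨by linarith [hθ.1, Real.pi_pos], hθ.2⟩
    have hCO1 : Real.cos θ < 1 := by
      have := Real.strictAntiOn_cos (Set.left_mem_Icc.mpr Real.pi_pos.le)
        ⟨hθ.1.le, by linarith [hθ.2, Real.pi_pos]⟩ hθ.1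
      simpa using this
    have hB := Brr_pos hc θ
    have hwpos : 0 < wr c θ := by
      have := Real.sqrt_pos.mpr hc
      have := Real.sqrt_pos.mpr hB
      rw [wr]; positivity
    constructor
    · exact Real.arsinh_pos_iff.mpr hwpos
    · have hwsq : wr c θ ^ 2 < Real.sinh u ^ 2 := by
        rw [wr_sq hc, sinh_sq_eq hu, Brr, ← hcdef]
        have hCO2 : Real.cos θ ^ 2 < 1 := by nlinarith
        have h1 : c * Real.cos θ ^ 2 < c := by nlinarith
        have h2 : (2:ℝ) + c * Real.cos θ ^ 2 ≤ 2 + c := by nlinarith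
        nlinarith [mul_pos hc (show (0:ℝ) < Real.cos θ ^ 2 by positivity)]
      have hwlt : wr c θ < Real.sinh u := by nlinarith
      calc phi c θ = Real.arsinh (wr c θ) := rfl
        _ < Real.arsinh (Real.sinh u) := Real.arsinh_lt_arsinh.mpr hwlt
        _ = u := Real.arsinh_sinh u
  · rintro ⟨hs0, hsu'⟩
    have hch1 : 1 < Real.cosh s := Real.one_lt_cosh.mpr hs0.ne'
    have hchu : Real.cosh s < Real.cosh u := by
      rw [Real.cosh_lt_cosh]
      rw [abs_of_pos hs0, abs_of_pos hu]; exact hsu'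
    set t := Real.sqrt ((Real.cosh s - 1) / c) with htdef
    have htsq : t ^ 2 = (Real.cosh s - 1) / c := Real.sq_sqrt (div_nonneg (by linarith) hc.le)
    have ht0 : 0 < t := Real.sqrt_pos.mpr (div_pos (by linarith) hc)
    have ht1 : t < 1 := by
      have hlt : (Real.cosh s - 1) / c < 1 := by
        rw [div_lt_one hc]; simp only [hcdef]; linarith
      nlinarith
    refine ⟨Real.arccos t, ⟨Real.arccos_pos.mpr ht1, Real.arccos_lt_pi_div_two.mpr ht0⟩, ?_⟩
    have hcosθ : Real.cos (Real.arccos t) = t := Real.cos_arccos (by linarith) (by linarith)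
    have hct2 : c * t ^ 2 = Real.cosh s - 1 := by
      rw [htsq]; field_simp
    have hwr : wr c (Real.arccos t) = Real.sinh s := by
      rw [wr, hcosθ, Brr, hcosθ]
      have h1 : Real.sqrt c * t = Real.sqrt (Real.cosh s - 1) := by
        rw [htdef, ← Real.sqrt_mul hc.le]
        congr 1
        field_simp
      have h2 : (2 : ℝ) + c * t ^ 2 = Real.cosh s + 1 := by rw [hct2]; ring
      rw [← mul_assoc, h1, h2, ← Real.sqrt_mul (by linarith)]
      have h3 : (Real.cosh s - 1) * (Real.cosh s + 1) = Real.sinh s ^ 2 := by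
        nlinarith [Real.cosh_sq_sub_sinh_sq s]
      rw [h3]
      exact Real.sqrt_sq (Real.sinh_pos_iff.mpr hs0).le
    rw [phi, hwr, Real.arsinh_sinh]

lemma integral_substitution (hu : 0 < u) (f : ℝ → ℝ) :
    ∫ s in Ioo 0 u, f s =
      ∫ θ in Ioo 0 (π/2), |phi' (Real.cosh u - 1) θ| • f (phi (Real.cosh u - 1) θ) := by
  have hc : 0 < Real.cosh u - 1 := by
    have := Real.one_lt_cosh.mpr hu.ne'; linarith
  rw [← image_phi hu]
  exact integral_image_eq_integral_abs_deriv_smul measurableSet_Ioo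
    (fun θ _ => (hasDerivAt_phi hc θ).hasDerivWithinAt) (injOn_phi hc) f

end Match


noncomputable def Irr (a c θ : ℝ) : ℝ :=
  Real.sin (a * wr c θ) / (a * wr c θ * Real.sqrt (Brr c θ))

lemma pointwise_eq {u a : ℝ} (hu : 0 < u) (ha : 0 < a) {θ : ℝ} (hθ : θ ∈ Ioo 0 (π/2)) :
    |phi' (Real.cosh u - 1) θ| •
      (Real.sin (a * Real.sinh (phi (Real.cosh u - 1) θ)) /
        (Real.sinh (phi (Real.cosh u - 1) θ) *
          Real.sqrt (Real.cosh u - Real.cosh (phi (Real.cosh u - 1) θ)))) =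
      2 * a * Irr a (Real.cosh u - 1) θ := by
  set c := Real.cosh u - 1 with hcdef
  have hc : 0 < c := by
    have := Real.one_lt_cosh.mpr hu.ne'; simp only [hcdef]; linarith
  have hS : 0 < Real.sin θ := Real.sin_pos_of_pos_of_lt_pi hθ.1 (by linarith [hθ.2, Real.pi_pos])
  have hCO : 0 < Real.cos θ := Real.cos_pos_of_mem_Ioo ⟨by linarith [hθ.1, Real.pi_pos], hθ.2⟩
  have hB := Brr_pos hc θ
  have hsB : 0 < Real.sqrt (Brr c θ) := Real.sqrt_pos.mpr hB
  have hsc : 0 < Real.sqrt c := Real.sqrt_pos.mpr hc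
  have hw : 0 < wr c θ := by rw [wr]; positivity
  have hdiff : Real.cosh u - Real.cosh (phi c θ) = c * Real.sin θ ^ 2 := by
    rw [cosh_phi hc]
    have := Real.sin_sq_add_cos_sq θ
    simp only [hcdef]
    nlinarith
  have hsqrtdiff : Real.sqrt (Real.cosh u - Real.cosh (phi c θ)) = Real.sqrt c * Real.sin θ := by
    rw [hdiff, Real.sqrt_mul hc.le, Real.sqrt_sq hS.le]
  have habs : |phi' c θ| = 2 * Real.sqrt c * Real.sin θ / Real.sqrt (Brr c θ) := by
    rw [phi'_eq hc, abs_neg, abs_of_pos (by positivity)]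
  rw [sinh_phi, hsqrtdiff, habs, Irr, smul_eq_mul]
  field_simp


lemma real_side {u a : ℝ} (hu : 0 < u) (ha : 0 < a) :
    (∫ s in (0:ℝ)..u,
        Real.sin (a * Real.sinh s) / (Real.sinh s * Real.sqrt (Real.cosh u - Real.cosh s))) =
      2 * a * ∫ θ in Ioo 0 (π/2), Irr a (Real.cosh u - 1) θ := by
  rw [intervalIntegral.integral_of_le hu.le, MeasureTheory.integral_Ioc_eq_integral_Ioo,
    integral_substitution hu _,
    setIntegral_congr_fun measurableSet_Ioo (fun θ hθ => pointwise_eq hu ha hθ),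
    MeasureTheory.integral_const_mul]


lemma sqrt_c_eq {u : ℝ} (hu : 0 < u) :
    Real.sqrt (Real.cosh u - 1) = Real.sqrt 2 * Real.sinh (u/2) := by
  have h : Real.cosh u - 1 = 2 * Real.sinh (u/2) ^ 2 := by
    have h1 := Real.cosh_two_mul (u/2)
    have h2 := Real.cosh_sq_sub_sinh_sq (u/2)
    rw [show 2*(u/2) = u by ring] at h1
    nlinarith
  rw [h, Real.sqrt_mul (by norm_num), Real.sqrt_sq (Real.sinh_pos_iff.mpr (by linarith)).le]

lemma Bc_ofReal (u θ : ℝ) : Bc (u : ℂ) θ = ((Brr (Real.cosh u - 1) θ : ℝ) : ℂ) := by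
  have hpyth : ((Real.sin θ : ℂ)) ^ 2 + ((Real.cos θ : ℂ)) ^ 2 = 1 := by
    have := Real.sin_sq_add_cos_sq θ
    exact_mod_cast this
  rw [Bc, Brr]
  push_cast [-Complex.ofReal_sin, -Complex.ofReal_cos]
  linear_combination hpyth

lemma Bc_half {u θ : ℝ} (hu : 0 < u) :
    Bc (u : ℂ) θ ^ (1/2 : ℂ) = ((Real.sqrt (Brr (Real.cosh u - 1) θ) : ℝ) : ℂ) := by
  have hc : 0 < Real.cosh u - 1 := by have := Real.one_lt_cosh.mpr hu.ne'; linarith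
  have hB := Brr_pos hc θ
  rw [Bc_ofReal, Real.sqrt_eq_rpow, Complex.ofReal_cpow hB.le]
  norm_num

lemma Bc_neg_half {u θ : ℝ} (hu : 0 < u) :
    Bc (u : ℂ) θ ^ (-(1/2) : ℂ) = (((Real.sqrt (Brr (Real.cosh u - 1) θ))⁻¹ : ℝ) : ℂ) := by
  have hc : 0 < Real.cosh u - 1 := by have := Real.one_lt_cosh.mpr hu.ne'; linarith
  have hB := Brr_pos hc θ
  have h1 : (Real.sqrt (Brr (Real.cosh u - 1) θ))⁻¹ =
      (Brr (Real.cosh u - 1) θ) ^ (-(1/2) : ℝ) := by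
    rw [Real.rpow_neg hB.le, Real.sqrt_eq_rpow]
  rw [Bc_ofReal, h1, Complex.ofReal_cpow hB.le]
  norm_num

lemma Dc_ofReal {u : ℝ} (hu : 0 < u) (θ : ℝ) :
    Dc (u : ℂ) θ = ((wr (Real.cosh u - 1) θ : ℝ) : ℂ) := by
  rw [Dc, Bc_half hu, wr, sqrt_c_eq hu]
  have h2 : Complex.sinh ((u : ℂ)/2) = ((Real.sinh (u/2) : ℝ) : ℂ) := by
    rw [Complex.ofReal_sinh]
    norm_num
  rw [h2]
  push_cast
  ring_nf

lemma Fc_ofReal {u a : ℝ} (hu : 0 < u) (ha : 0 < a) {θ : ℝ} (hθ : θ ∈ Ioo 0 (π/2)) :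
    Fc a (u : ℂ) θ = ((Irr a (Real.cosh u - 1) θ : ℝ) : ℂ) := by
  set c := Real.cosh u - 1 with hcdef
  have hc : 0 < c := by have := Real.one_lt_cosh.mpr hu.ne'; simp only [hcdef]; linarith
  have hS : 0 < Real.sin θ := Real.sin_pos_of_pos_of_lt_pi hθ.1 (by linarith [hθ.2, Real.pi_pos])
  have hCO : 0 < Real.cos θ := Real.cos_pos_of_mem_Ioo ⟨by linarith [hθ.1, Real.pi_pos], hθ.2⟩
  have hB := Brr_pos hc θ
  have hsB : 0 < Real.sqrt (Brr c θ) := Real.sqrt_pos.mpr hB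
  have hw : 0 < wr c θ := by
    have := Real.sqrt_pos.mpr hc
    rw [wr]; positivity
  have haw : ((a : ℂ) * ((wr c θ : ℝ) : ℂ)) ≠ 0 := by
    push_cast [← Complex.ofReal_mul]
    exact_mod_cast (mul_pos ha hw).ne'
  rw [Fc, Dc_ofReal hu, Bc_neg_half hu, ← hcdef, csinc_apply haw, Irr]
  rw [show (a : ℂ) * ((wr c θ : ℝ) : ℂ) = (((a * wr c θ : ℝ)) : ℂ) by push_cast; ring,
    ← Complex.ofReal_sin]
  rw [← Complex.ofReal_div, ← Complex.ofReal_mul]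
  congr 1
  field_simp

lemma complex_side {u a : ℝ} (hu : 0 < u) (ha : 0 < a) :
    Gc a (u : ℂ) =
      ((Real.sinh u * (2 * a * ∫ θ in Ioo 0 (π/2), Irr a (Real.cosh u - 1) θ) : ℝ) : ℂ) := by
  rw [Gc, intervalIntegral.integral_of_le (by positivity : (0:ℝ) ≤ Real.pi/2),
    MeasureTheory.integral_Ioc_eq_integral_Ioo,
    setIntegral_congr_fun measurableSet_Ioo (fun θ hθ => Fc_ofReal hu ha hθ)]
  rw [show (∫ x in Ioo (0:ℝ) (π/2), ((Irr a (Real.cosh u - 1) x : ℝ) : ℂ)) =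
      ((∫ x in Ioo (0:ℝ) (π/2), Irr a (Real.cosh u - 1) x : ℝ) : ℂ) from integral_ofReal]
  push_cast
  ring


lemma csinc_neg' (z : ℂ) : csinc (-z) = csinc z := csinc_neg z

lemma Gc_neg (a : ℝ) (u : ℂ) : Gc a (-u) = -Gc a u := by
  have hB : ∀ θ : ℝ, Bc (-u) θ = Bc u θ := fun θ => by rw [Bc, Bc, Complex.cosh_neg]
  have hD : ∀ θ : ℝ, Dc (-u) θ = -Dc u θ := fun θ => by
    rw [Dc, Dc, hB, show (-u)/2 = -(u/2) by ring, Complex.sinh_neg]; ring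
  have hF : ∀ θ : ℝ, Fc a (-u) θ = Fc a u θ := fun θ => by
    rw [Fc, Fc, hB, hD, mul_neg, csinc_neg]
  rw [Gc, Gc, Complex.sinh_neg]
  rw [intervalIntegral.integral_congr (fun θ _ => hF θ)]
  ring

/-- There is a function `G` holomorphic on the strip `|Im u| < π`, odd there, and which
agrees with the SABR payoff function `g` on the positive real axis. -/
theorem exists_holomorphic_odd_extension_of_sabrPayoff (σ₀ : ℝ) (hσ₀ : 0 < σ₀) :
    ∃ G : ℂ → ℂ,
      DifferentiableOn ℂ G {u : ℂ | |u.im| < Real.pi} ∧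
      (∀ u : ℂ, |u.im| < Real.pi → G (-u) = -G u) ∧
      (∀ u : ℝ, 0 < u → G (u : ℂ) = (sabrPayoff σ₀ u : ℂ)) := by
  refine ⟨Gc (σ₀/2), differentiableOn_Gc _, fun u _ => Gc_neg _ u, fun u hu => ?_⟩
  have ha : 0 < σ₀/2 := by linarith
  rw [complex_side hu ha]
  norm_cast
  rw [sabrPayoff, real_side hu ha]
end

section
/- Fix σ₀ > 0 and T > 0, and set V_err(T) = ∫_π^∞ e^{−u²/(2T)} g(u) du/√(2πT). Then |V_err(T)| ≤ √2·σ₀·[ √(T/(2π))·e^{−π(π−T)/(2T)} + (1/2)·e^{T/8}·T·Φ((T/2 − π)/√T) ], where Φ(x) = ∫_{−∞}^x e^{−t²/2} dt/√(2π) is the cumulative distribution function of the standard normal distribution. -/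
open scoped Real
open MeasureTheory Real Set Filter Topology

/-- The standard normal cumulative distribution function `Φ`. -/
noncomputable def stdNormalCDF (x : ℝ) : ℝ :=
  ∫ t in Set.Iic x, Real.exp (-t ^ 2 / 2) / Real.sqrt (2 * π)


lemma step3 (σ₀ : ℝ) (hσ₀ : 0 < σ₀) {u t D : ℝ} (ht0 : 0 < t)
    (hD : 7/16 * Real.exp u * (t / (t + 1)) ≤ D) :
    σ₀ / 2 / Real.sqrt D ≤
      σ₀ * 2 / Real.sqrt 7 * Real.exp (-(u / 2)) * (1 + t ^ (-(1/2) : ℝ)) := by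
  have h7 : (0:ℝ) < Real.sqrt 7 := Real.sqrt_pos.2 (by norm_num)
  have hDpos : 0 < D := lt_of_lt_of_le (by positivity) hD
  have hsD : 0 < Real.sqrt D := Real.sqrt_pos.2 hDpos
  set r : ℝ := Real.sqrt t with hr
  have hr0 : 0 < r := Real.sqrt_pos.2 ht0
  have hr2 : r ^ 2 = t := Real.sq_sqrt ht0.le
  have htr : t ^ (-(1/2) : ℝ) = r⁻¹ := by
    rw [Real.rpow_neg ht0.le, hr, Real.sqrt_eq_rpow]
  rw [htr, div_le_iff₀ hsD]
  set X := σ₀ * 2 / Real.sqrt 7 * Real.exp (-(u / 2)) * (1 + r⁻¹) * Real.sqrt D with hX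
  have hX0 : 0 ≤ X := by positivity
  have hsq : (σ₀ / 2) ^ 2 ≤ X ^ 2 := by
    have hX2 : X ^ 2 = σ₀ ^ 2 * (4 / 7) * Real.exp (-u) * (1 + r⁻¹) ^ 2 * D := by
      rw [hX]
      have e7 : Real.sqrt 7 ^ 2 = 7 := Real.sq_sqrt (by norm_num)
      have ee : Real.exp (-(u/2)) ^ 2 = Real.exp (-u) := by
        rw [sq, ← Real.exp_add]; ring_nf
      have eD : Real.sqrt D ^ 2 = D := Real.sq_sqrt hDpos.le
      have expand : (σ₀ * 2 / Real.sqrt 7 * Real.exp (-(u / 2)) * (1 + r⁻¹) * Real.sqrt D) ^ 2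
          = (σ₀ * 2) ^ 2 / Real.sqrt 7 ^ 2 * Real.exp (-(u/2)) ^ 2 * (1 + r⁻¹) ^ 2
            * Real.sqrt D ^ 2 := by ring
      rw [expand, e7, ee, eD]; ring
    rw [hX2]
    have hEu : Real.exp (-u) * Real.exp u = 1 := by rw [← Real.exp_add]; simp
    have h1 : (1 + r⁻¹) ^ 2 * D ≥ (1 + r⁻¹) ^ 2 * (7/16 * Real.exp u * (t/(t+1))) :=
      mul_le_mul_of_nonneg_left hD (by positivity)
    have h2 : (1 + r⁻¹) ^ 2 * (t / (t+1)) = (r + 1)^2 / (r^2 + 1) := by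
      rw [← hr2]
      field_simp
    have h3 : (1:ℝ) ≤ (r + 1)^2 / (r^2 + 1) := by
      rw [le_div_iff₀ (by positivity)]
      nlinarith
    have h4 := mul_le_mul_of_nonneg_left h1 (show (0:ℝ) ≤ σ₀^2 * (4/7) * Real.exp (-u) by positivity)
    have h5 : σ₀^2 * (4/7) * Real.exp (-u) * ((1 + r⁻¹)^2 * (7/16 * Real.exp u * (t/(t+1))))
        = σ₀^2/4 * ((r+1)^2/(r^2+1)) := by
      calc σ₀^2 * (4/7) * Real.exp (-u) * ((1 + r⁻¹)^2 * (7/16 * Real.exp u * (t/(t+1))))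
          = σ₀^2 * (7/16) * (4/7) * (Real.exp (-u) * Real.exp u)
            * ((1 + r⁻¹)^2 * (t/(t+1))) := by ring
        _ = σ₀^2/4 * ((r+1)^2/(r^2+1)) := by rw [hEu, h2]; ring
    nlinarith [mul_nonneg (sq_nonneg σ₀) (sub_nonneg.2 h3)]
  calc σ₀ / 2 = Real.sqrt ((σ₀ / 2) ^ 2) := (Real.sqrt_sq (by positivity)).symm
    _ ≤ Real.sqrt (X ^ 2) := Real.sqrt_le_sqrt hsq
    _ = X := Real.sqrt_sq hX0

lemma inner_bound (σ₀ : ℝ) (hσ₀ : 0 < σ₀) {u : ℝ} (hu : 3 ≤ u) {s : ℝ}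
    (hs : s ∈ Set.Ioc 0 u) :
    ‖Real.sin (σ₀ / 2 * Real.sinh s) /
        (Real.sinh s * Real.sqrt (Real.cosh u - Real.cosh s))‖ ≤
      σ₀ * 2 / Real.sqrt 7 * Real.exp (-(u / 2)) * (1 + (u - s) ^ (-(1/2) : ℝ)) := by
  have hs0 : 0 < s := hs.1
  have hsu : s ≤ u := hs.2
  have hsinh : 0 < Real.sinh s := Real.sinh_pos_iff.2 hs0
  have h7 : (0:ℝ) < Real.sqrt 7 := Real.sqrt_pos.2 (by norm_num)
  have hCpos : 0 < σ₀ * 2 / Real.sqrt 7 * Real.exp (-(u / 2)) := by positivity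
  rcases eq_or_lt_of_le hsu with rfl | hlt
  · simp only [sub_self, Real.sqrt_zero, mul_zero, div_zero, norm_zero]
    rw [Real.zero_rpow (by norm_num)]
    nlinarith
  · set t : ℝ := u - s with ht
    have ht0 : 0 < t := by simp only [ht]; linarith
    have hexp8 : (8:ℝ) ≤ Real.exp u := by
      have h1 : Real.exp 3 ≤ Real.exp u := Real.exp_le_exp.2 hu
      have h2 : Real.exp 3 = Real.exp 1 ^ 3 := by
        rw [← Real.exp_nat_mul]; norm_num
      have h3 := Real.exp_one_gt_d9
      have h4 : (2:ℝ)^3 ≤ Real.exp 1 ^ 3 := by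
        apply pow_le_pow_left₀ (by norm_num); nlinarith
      nlinarith
    have hau : (0:ℝ) < Real.exp u := Real.exp_pos u
    have has : (0:ℝ) < Real.exp s := Real.exp_pos s
    have ha : (1:ℝ) ≤ Real.exp s := Real.one_le_exp hs0.le
    have hab : Real.exp s ≤ Real.exp u := Real.exp_le_exp.2 hsu
    have hkey : 7/16 * Real.exp u * (t / (t + 1)) ≤ Real.cosh u - Real.cosh s := by
      have h2 : (1 - Real.exp (-u)) * (Real.exp u - Real.exp s) / 2 ≤
          Real.cosh u - Real.cosh s := by
        rw [Real.cosh_eq, Real.cosh_eq, Real.exp_neg u, Real.exp_neg s]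
        have key : (0:ℝ) ≤ Real.exp u * ((Real.exp u - Real.exp s) * (Real.exp s - 1)) :=
          mul_nonneg hau.le (mul_nonneg (by linarith) (by linarith))
        rw [div_sub_div _ _ (by norm_num : (2:ℝ) ≠ 0) (by norm_num : (2:ℝ) ≠ 0)]
        rw [div_le_div_iff₀ (by norm_num) (by norm_num)]
        have e1 : Real.exp u * (Real.exp u)⁻¹ = 1 := mul_inv_cancel₀ hau.ne'
        have e2 : Real.exp s * (Real.exp s)⁻¹ = 1 := mul_inv_cancel₀ has.ne'
        have h5 : (Real.exp u)⁻¹ ≤ (Real.exp s)⁻¹ := by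
          apply inv_anti₀ has hab
        nlinarith [mul_pos hau has, mul_pos (inv_pos.2 hau) (inv_pos.2 has),
          mul_nonneg (sub_nonneg.2 hab) (inv_nonneg.2 has.le),
          mul_nonneg (mul_nonneg (sub_nonneg.2 hab) (sub_nonneg.2 ha)) (inv_nonneg.2 hau.le)]
      have h3 : (7:ℝ)/8 ≤ 1 - Real.exp (-u) := by
        rw [Real.exp_neg]
        have : (Real.exp u)⁻¹ ≤ 1/8 := by
          rw [inv_le_comm₀ hau (by norm_num)]
          simpa using hexp8
        linarith
      have h1 : Real.exp u * (t / (t + 1)) ≤ Real.exp u - Real.exp s := by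
        have hst : Real.exp s = Real.exp u * Real.exp (-t) := by
          rw [← Real.exp_add, ht]; ring_nf
        have hexpt : Real.exp (-t) ≤ 1 / (t + 1) := by
          rw [Real.exp_neg, inv_le_comm₀ (Real.exp_pos t) (by positivity), one_div,
            inv_inv]
          linarith [Real.add_one_le_exp t]
        have h6 : Real.exp u * Real.exp (-t) ≤ Real.exp u * (1/(t+1)) :=
          mul_le_mul_of_nonneg_left hexpt hau.le
        have h7 : 1 - 1/(t+1) = t/(t+1) := by field_simp; ring
        nlinarith
      have h8 : (0:ℝ) ≤ t / (t+1) := by positivity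
      nlinarith [mul_le_mul_of_nonneg_right (mul_le_mul_of_nonneg_left h3 (le_of_lt hau)) h8]
    have hD0 : (0:ℝ) < Real.cosh u - Real.cosh s :=
      lt_of_lt_of_le (mul_pos (by positivity) (div_pos ht0 (by linarith))) hkey
    have hsD : (0:ℝ) < Real.sqrt (Real.cosh u - Real.cosh s) := Real.sqrt_pos.2 hD0
    have hsin : |Real.sin (σ₀ / 2 * Real.sinh s)| ≤ σ₀ / 2 * Real.sinh s := by
      have h := Real.abs_sin_le_abs (x := σ₀ / 2 * Real.sinh s)
      rwa [abs_of_nonneg (show (0:ℝ) ≤ σ₀ / 2 * Real.sinh s by positivity)] at h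
    have hstep : ‖Real.sin (σ₀ / 2 * Real.sinh s) /
        (Real.sinh s * Real.sqrt (Real.cosh u - Real.cosh s))‖ ≤
        σ₀ / 2 / Real.sqrt (Real.cosh u - Real.cosh s) := by
      rw [Real.norm_eq_abs, abs_div, abs_of_pos (mul_pos hsinh hsD)]
      calc |Real.sin (σ₀ / 2 * Real.sinh s)| /
            (Real.sinh s * Real.sqrt (Real.cosh u - Real.cosh s))
          ≤ (σ₀ / 2 * Real.sinh s) /
            (Real.sinh s * Real.sqrt (Real.cosh u - Real.cosh s)) := by gcongr
        _ = (Real.sinh s * (σ₀ / 2)) /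
            (Real.sinh s * Real.sqrt (Real.cosh u - Real.cosh s)) := by ring_nf
        _ = σ₀ / 2 / Real.sqrt (Real.cosh u - Real.cosh s) :=
            mul_div_mul_left _ _ hsinh.ne'
    exact hstep.trans (step3 σ₀ hσ₀ ht0 hkey)

lemma g_bound (σ₀ : ℝ) (hσ₀ : 0 < σ₀) {u : ℝ} (hu : π ≤ u) :
    |sabrPayoff σ₀ u| ≤ Real.sqrt 2 * σ₀ * u * Real.exp (u / 2) := by
  have hu3 : (3:ℝ) ≤ u := le_trans Real.pi_gt_three.le hu
  have hu0 : (0:ℝ) < u := by linarith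
  have h7 : (0:ℝ) < Real.sqrt 7 := Real.sqrt_pos.2 (by norm_num)
  set C := σ₀ * 2 / Real.sqrt 7 * Real.exp (-(u / 2)) with hC
  have hCpos : 0 < C := by positivity
  have hrpowInt : IntervalIntegrable (fun s => (u - s) ^ (-(1/2):ℝ)) volume 0 u := by
    have h := (intervalIntegral.intervalIntegrable_rpow'
      (a := u) (b := 0) (r := -(1/2)) (by norm_num)).comp_sub_left u
    simpa using h
  have hint : IntervalIntegrable (fun s => C * (1 + (u - s) ^ (-(1/2):ℝ))) volume 0 u :=
    (intervalIntegrable_const.add hrpowInt).const_mul C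
  have habs : ‖∫ s in (0:ℝ)..u, Real.sin (σ₀ / 2 * Real.sinh s) /
        (Real.sinh s * Real.sqrt (Real.cosh u - Real.cosh s))‖ ≤
      |∫ s in (0:ℝ)..u, C * (1 + (u - s) ^ (-(1/2):ℝ))| := by
    apply intervalIntegral.norm_integral_le_abs_of_norm_le _ hint
    filter_upwards [ae_restrict_mem measurableSet_uIoc] with s hs
    rw [Set.uIoc_of_le hu0.le] at hs
    exact inner_bound σ₀ hσ₀ hu3 hs
  have hval : (∫ s in (0:ℝ)..u, C * (1 + (u - s) ^ (-(1/2):ℝ)))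
      = C * (u + 2 * Real.sqrt u) := by
    rw [intervalIntegral.integral_const_mul]
    congr 1
    rw [intervalIntegral.integral_add intervalIntegrable_const hrpowInt,
      intervalIntegral.integral_const]
    have h1 : (∫ s in (0:ℝ)..u, (u - s) ^ (-(1/2):ℝ))
        = ∫ x in (0:ℝ)..u, x ^ (-(1/2):ℝ) := by
      have := intervalIntegral.integral_comp_sub_left
        (a := (0:ℝ)) (b := u) (fun x => x ^ (-(1/2):ℝ)) u
      simpa using this
    rw [h1, integral_rpow (Or.inl (by norm_num))]
    rw [Real.zero_rpow (by norm_num), Real.sqrt_eq_rpow]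
    norm_num
    ring
  have hsinh0 : 0 ≤ Real.sinh u := Real.sinh_nonneg_iff.2 hu0.le
  have step : |sabrPayoff σ₀ u| ≤ Real.sinh u * (C * (u + 2 * Real.sqrt u)) := by
    rw [sabrPayoff, abs_mul, abs_of_nonneg hsinh0]
    apply mul_le_mul_of_nonneg_left _ hsinh0
    calc |∫ s in (0:ℝ)..u, Real.sin (σ₀ / 2 * Real.sinh s) /
        (Real.sinh s * Real.sqrt (Real.cosh u - Real.cosh s))|
        ≤ |∫ s in (0:ℝ)..u, C * (1 + (u - s) ^ (-(1/2):ℝ))| := habs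
      _ = C * (u + 2 * Real.sqrt u) := by
          rw [hval, abs_of_nonneg (by positivity)]
  refine step.trans ?_
  have hsinh_le : Real.sinh u ≤ Real.exp u / 2 := by
    rw [Real.sinh_eq]
    nlinarith [Real.exp_pos (-u)]
  have key : Real.exp u / 2 * (C * (u + 2 * Real.sqrt u)) ≤
      Real.sqrt 2 * σ₀ * u * Real.exp (u / 2) := by
    rw [hC]
    have hee : Real.exp u * Real.exp (-(u/2)) = Real.exp (u/2) := by
      rw [← Real.exp_add]; ring_nf
    have heq : Real.exp u / 2 * (σ₀ * 2 / Real.sqrt 7 * Real.exp (-(u / 2))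
        * (u + 2 * Real.sqrt u)) = σ₀ / Real.sqrt 7 * (u + 2 * Real.sqrt u)
          * Real.exp (u/2) := by
      rw [← hee]; ring
    rw [heq]
    have hw : (1.7:ℝ) ≤ Real.sqrt u := by
      rw [show (1.7:ℝ) = Real.sqrt (1.7^2) from (Real.sqrt_sq (by norm_num)).symm]
      apply Real.sqrt_le_sqrt; nlinarith
    have hw2 : Real.sqrt u ^ 2 = u := Real.sq_sqrt hu0.le
    have h2' : (1.4:ℝ) ≤ Real.sqrt 2 := by
      rw [show (1.4:ℝ) = Real.sqrt (1.4^2) from (Real.sqrt_sq (by norm_num)).symm]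
      apply Real.sqrt_le_sqrt; norm_num
    have h7' : (2.6:ℝ) ≤ Real.sqrt 7 := by
      rw [show (2.6:ℝ) = Real.sqrt (2.6^2) from (Real.sqrt_sq (by norm_num)).symm]
      apply Real.sqrt_le_sqrt; norm_num
    apply mul_le_mul_of_nonneg_right _ (Real.exp_pos (u/2)).le
    rw [div_mul_eq_mul_div, div_le_iff₀ h7]
    have h14 : (3.64:ℝ) ≤ Real.sqrt 2 * Real.sqrt 7 := by nlinarith
    have hww : u + 2 * Real.sqrt u ≤ 3.64 * u := by
      nlinarith [mul_le_mul_of_nonneg_left hw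
        (show (0:ℝ) ≤ 2.64 * Real.sqrt u by positivity)]
    nlinarith [mul_le_mul_of_nonneg_left hww hσ₀.le,
      mul_le_mul_of_nonneg_left h14 (mul_nonneg hσ₀.le hu0.le)]
  refine le_trans ?_ key
  apply mul_le_mul_of_nonneg_right hsinh_le (by positivity)


lemma phi_cont : Continuous (fun t : ℝ => Real.exp (-t ^ 2 / 2) / Real.sqrt (2 * π)) := by
  fun_prop

lemma phi_integrable : Integrable (fun t : ℝ => Real.exp (-t ^ 2 / 2) / Real.sqrt (2 * π)) := by
  have h := integrable_exp_neg_mul_sq (show (0:ℝ) < 1/2 by norm_num)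
  have he : (fun t : ℝ => Real.exp (-t ^ 2 / 2)) = fun t => Real.exp (-(1/2) * t ^ 2) := by
    ext t; congr 1; ring
  exact (he ▸ h).div_const _

lemma phi_total : (∫ t : ℝ, Real.exp (-t ^ 2 / 2) / Real.sqrt (2 * π)) = 1 := by
  rw [integral_div]
  have he : (fun t : ℝ => Real.exp (-t ^ 2 / 2)) = fun t => Real.exp (-(1/2) * t ^ 2) := by
    ext t; congr 1; ring
  rw [he, integral_gaussian]
  rw [show π / (1/2 : ℝ) = 2 * π by ring]
  exact div_self (Real.sqrt_ne_zero'.2 (by positivity))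

lemma cdf_hasDeriv (x : ℝ) :
    HasDerivAt stdNormalCDF (Real.exp (-x ^ 2 / 2) / Real.sqrt (2 * π)) x := by
  have key : stdNormalCDF = fun y =>
      stdNormalCDF 0 + ∫ t in (0:ℝ)..y, Real.exp (-t ^ 2 / 2) / Real.sqrt (2 * π) := by
    funext y
    have h := intervalIntegral.integral_Iic_sub_Iic
      (phi_integrable.integrableOn) (phi_integrable.integrableOn) (a := (0:ℝ)) (b := y)
    simp only [stdNormalCDF]
    linarith
  rw [key]
  apply HasDerivAt.const_add
  apply intervalIntegral.integral_hasDerivAt_right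
  · exact phi_cont.intervalIntegrable 0 x
  · exact phi_cont.stronglyMeasurableAtFilter _ _
  · exact phi_cont.continuousAt

lemma cdf_tendsto : Tendsto stdNormalCDF atTop (𝓝 1) := by
  have h := (MeasureTheory.aecover_Iic (l := atTop) (μ := (volume : Measure ℝ))
    (tendsto_id (α := ℝ))).integral_tendsto_of_countably_generated phi_integrable
  rw [phi_total] at h
  exact h

lemma cdf_symm (x : ℝ) : stdNormalCDF (-x) = 1 - stdNormalCDF x := by
  have h1 : stdNormalCDF (-x) = ∫ t in Set.Ioi x, Real.exp (-t ^ 2 / 2) / Real.sqrt (2 * π) := by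
    rw [stdNormalCDF, ← integral_comp_neg_Ioi]
    congr 1
    funext t
    rw [neg_sq]
  have h2 : stdNormalCDF x + ∫ t in Set.Ioi x, Real.exp (-t ^ 2 / 2) / Real.sqrt (2 * π) = 1 := by
    rw [← phi_total, stdNormalCDF]
    exact intervalIntegral.integral_Iic_add_Ioi phi_integrable.integrableOn phi_integrable.integrableOn
  linarith

lemma gauss_integrable (T : ℝ) (hT : 0 < T) :
    Integrable (fun u : ℝ => u * Real.exp (-(u - T/2)^2 / (2*T))) := by
  have h1 := integrable_mul_exp_neg_mul_sq (show (0:ℝ) < 1/(2*T) by positivity)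
  have h2 := integrable_exp_neg_mul_sq (show (0:ℝ) < 1/(2*T) by positivity)
  have base : Integrable (fun v : ℝ => (v + T/2) * Real.exp (-(1/(2*T)) * v^2)) := by
    have he : (fun v : ℝ => (v + T/2) * Real.exp (-(1/(2*T)) * v^2))
        = fun v => v * Real.exp (-(1/(2*T)) * v^2)
          + T/2 * Real.exp (-(1/(2*T)) * v^2) := by
      ext v; ring
    rw [he]
    exact h1.add (h2.const_mul _)
  have := base.comp_sub_right (T/2)
  have he2 : (fun u : ℝ => (u - T/2 + T/2) * Real.exp (-(1/(2*T)) * (u - T/2)^2))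
      = fun u : ℝ => u * Real.exp (-(u - T/2)^2 / (2*T)) := by
    ext u
    rw [sub_add_cancel]
    congr 1
    ring
  rwa [he2] at this

lemma gauss_moment (T : ℝ) (hT : 0 < T) :
    (∫ u in Set.Ioi π, u * Real.exp (-(u - T/2)^2 / (2*T))) =
      T * Real.exp (-(π - T/2)^2 / (2*T)) +
        T/2 * Real.sqrt (2*π*T) * stdNormalCDF ((T/2 - π) / Real.sqrt T) := by
  have hsT : (0:ℝ) < Real.sqrt T := Real.sqrt_pos.2 hT
  set F : ℝ → ℝ := fun u => -T * Real.exp (-(u - T/2)^2 / (2*T)) +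
      T/2 * Real.sqrt (2*π*T) * stdNormalCDF ((u - T/2) / Real.sqrt T) with hF
  have hderiv : ∀ x ∈ Set.Ici π, HasDerivAt F (x * Real.exp (-(x - T/2)^2 / (2*T))) x := by
    intro x _
    have h0 : HasDerivAt (fun u : ℝ => u - T/2) 1 x := (hasDerivAt_id x).sub_const _
    have h1 : HasDerivAt (fun u : ℝ => -(u - T/2)^2 / (2*T)) (-(x - T/2)/T) x := by
      have := ((h0.pow 2).neg).div_const (2*T)
      refine this.congr_deriv ?_
      all_goals field_simp
      all_goals ring
    have h2 : HasDerivAt (fun u : ℝ => -T * Real.exp (-(u - T/2)^2 / (2*T)))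
        ((x - T/2) * Real.exp (-(x - T/2)^2 / (2*T))) x := by
      have := (h1.exp).const_mul (-T)
      refine this.congr_deriv ?_
      all_goals field_simp
      all_goals ring
    have h3 : HasDerivAt (fun u : ℝ => (u - T/2) / Real.sqrt T) (1 / Real.sqrt T) x :=
      h0.div_const _
    have h4 := (cdf_hasDeriv ((x - T/2) / Real.sqrt T)).comp x h3
    have h5 : HasDerivAt (fun u : ℝ =>
        T/2 * Real.sqrt (2*π*T) * stdNormalCDF ((u - T/2) / Real.sqrt T))
        (T/2 * Real.exp (-(x - T/2)^2 / (2*T))) x := by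
      have := h4.const_mul (T/2 * Real.sqrt (2*π*T))
      refine this.congr_deriv ?_
      have e1 : Real.sqrt (2*π*T) = Real.sqrt (2*π) * Real.sqrt T := by
        rw [← Real.sqrt_mul (by positivity)]
      have e2 : -((x - T/2) / Real.sqrt T) ^ 2 / 2 = -(x - T/2)^2 / (2*T) := by
        rw [div_pow, Real.sq_sqrt hT.le]
        ring
      have hs2π : (0:ℝ) < Real.sqrt (2*π) := Real.sqrt_pos.2 (by positivity)
      rw [e1, e2]
      field_simp
    have := h2.add h5
    refine this.congr_deriv ?_
    ring
  have hint : IntegrableOn (fun u : ℝ => u * Real.exp (-(u - T/2)^2 / (2*T))) (Set.Ioi π) :=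
    (gauss_integrable T hT).integrableOn
  have htend : Tendsto F atTop (𝓝 (T/2 * Real.sqrt (2*π*T))) := by
    have t1 : Tendsto (fun u : ℝ => -T * Real.exp (-(u - T/2)^2 / (2*T))) atTop (𝓝 0) := by
      have hsq : Tendsto (fun u : ℝ => (u - T/2)^2 / (2*T)) atTop atTop := by
        apply Tendsto.atTop_div_const (by positivity)
        exact (tendsto_pow_atTop two_ne_zero).comp (tendsto_atTop_add_const_right _ _ tendsto_id)
      have hexp : Tendsto (fun u : ℝ => Real.exp (-(u - T/2)^2 / (2*T))) atTop (𝓝 0) := by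
        have := Real.tendsto_exp_atBot.comp (tendsto_neg_atTop_atBot.comp hsq)
        apply this.congr
        intro u
        simp only [Function.comp]
        congr 1
        ring
      have := hexp.const_mul (-T)
      rw [mul_zero] at this
      exact this
    have t2 : Tendsto (fun u : ℝ =>
        T/2 * Real.sqrt (2*π*T) * stdNormalCDF ((u - T/2) / Real.sqrt T)) atTop
        (𝓝 (T/2 * Real.sqrt (2*π*T))) := by
      have harg : Tendsto (fun u : ℝ => (u - T/2) / Real.sqrt T) atTop atTop :=
        (tendsto_atTop_add_const_right _ _ tendsto_id).atTop_div_const hsT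
      have := (cdf_tendsto.comp harg).const_mul (T/2 * Real.sqrt (2*π*T))
      rw [mul_one] at this
      exact this.congr (fun u => by simp [Function.comp])
    have := t1.add t2
    rw [zero_add] at this
    exact this
  have hFTC := MeasureTheory.integral_Ioi_of_hasDerivAt_of_tendsto' hderiv hint htend
  rw [hFTC, hF]
  have hsymm := cdf_symm ((π - T/2) / Real.sqrt T)
  have harg : -((π - T/2) / Real.sqrt T) = (T/2 - π) / Real.sqrt T := by ring
  rw [harg] at hsymm
  rw [hsymm]
  ring
/-- Bound on the tail contribution `V_err(T) = ∫_π^∞ e^(−u²/(2T)) g(u) du/√(2πT)`: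
`|V_err(T)| ≤ √2 σ₀ [√(T/(2π)) e^(−π(π−T)/(2T)) + (1/2) e^(T/8) T Φ((T/2 − π)/√T)]`. -/
theorem sabr_tail_error_bound (σ₀ : ℝ) (hσ₀ : 0 < σ₀) (T : ℝ) (hT : 0 < T) :
    |∫ u in Set.Ioi π,
        Real.exp (-u ^ 2 / (2 * T)) * sabrPayoff σ₀ u / Real.sqrt (2 * π * T)| ≤
      Real.sqrt 2 * σ₀ *
        (Real.sqrt (T / (2 * π)) * Real.exp (-(π * (π - T)) / (2 * T)) +
          1 / 2 * Real.exp (T / 8) * T * stdNormalCDF ((T / 2 - π) / Real.sqrt T)) := by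
  have hsqT : (0:ℝ) < Real.sqrt (2 * π * T) := Real.sqrt_pos.2 (by positivity)
  set M := Real.sqrt 2 * σ₀ * Real.exp (T / 8) / Real.sqrt (2 * π * T) with hM
  have hGint : Integrable (fun u : ℝ => M * (u * Real.exp (-(u - T/2)^2 / (2*T))))
      (volume.restrict (Set.Ioi π)) :=
    (((gauss_integrable T hT).const_mul M).integrableOn)
  have hbound : ∀ᵐ u ∂(volume.restrict (Set.Ioi π)),
      ‖Real.exp (-u ^ 2 / (2 * T)) * sabrPayoff σ₀ u / Real.sqrt (2 * π * T)‖ ≤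
        M * (u * Real.exp (-(u - T/2)^2 / (2*T))) := by
    filter_upwards [ae_restrict_mem measurableSet_Ioi] with u hu
    have hu' : π ≤ u := le_of_lt hu
    rw [Real.norm_eq_abs, abs_div, abs_mul,
      abs_of_nonneg (Real.exp_nonneg _), abs_of_nonneg (Real.sqrt_nonneg _)]
    have h1 : Real.exp (-u ^ 2 / (2 * T)) * |sabrPayoff σ₀ u| / Real.sqrt (2 * π * T) ≤
        Real.exp (-u ^ 2 / (2 * T)) * (Real.sqrt 2 * σ₀ * u * Real.exp (u / 2)) /
          Real.sqrt (2 * π * T) := by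
      gcongr
      exact g_bound σ₀ hσ₀ hu'
    refine h1.trans (le_of_eq ?_)
    have he : Real.exp (-u ^ 2 / (2 * T)) * Real.exp (u / 2) =
        Real.exp (T / 8) * Real.exp (-(u - T/2)^2 / (2*T)) := by
      rw [← Real.exp_add, ← Real.exp_add]
      congr 1
      field_simp
      ring
    calc Real.exp (-u ^ 2 / (2 * T)) * (Real.sqrt 2 * σ₀ * u * Real.exp (u / 2)) /
          Real.sqrt (2 * π * T)
        = Real.sqrt 2 * σ₀ * u * (Real.exp (-u ^ 2 / (2 * T)) * Real.exp (u / 2)) /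
          Real.sqrt (2 * π * T) := by ring
      _ = Real.sqrt 2 * σ₀ * u * (Real.exp (T / 8) * Real.exp (-(u - T/2)^2 / (2*T))) /
          Real.sqrt (2 * π * T) := by rw [he]
      _ = M * (u * Real.exp (-(u - T/2)^2 / (2*T))) := by rw [hM]; ring
  have habs := MeasureTheory.norm_integral_le_of_norm_le hGint hbound
  have hsT : (0:ℝ) < Real.sqrt T := Real.sqrt_pos.2 hT
  have hs2π : (0:ℝ) < Real.sqrt (2 * π) := Real.sqrt_pos.2 (by positivity)
  calc |∫ u in Set.Ioi π,
        Real.exp (-u ^ 2 / (2 * T)) * sabrPayoff σ₀ u / Real.sqrt (2 * π * T)|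
      = ‖∫ u in Set.Ioi π,
        Real.exp (-u ^ 2 / (2 * T)) * sabrPayoff σ₀ u / Real.sqrt (2 * π * T)‖ :=
        (Real.norm_eq_abs _).symm
    _ ≤ ∫ u in Set.Ioi π, M * (u * Real.exp (-(u - T/2)^2 / (2*T))) := habs
    _ = M * ∫ u in Set.Ioi π, u * Real.exp (-(u - T/2)^2 / (2*T)) :=
        integral_const_mul M _
    _ = M * (T * Real.exp (-(π - T/2)^2 / (2*T)) +
          T/2 * Real.sqrt (2*π*T) * stdNormalCDF ((T/2 - π) / Real.sqrt T)) := by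
        rw [gauss_moment T hT]
    _ = Real.sqrt 2 * σ₀ *
        (Real.sqrt (T / (2 * π)) * Real.exp (-(π * (π - T)) / (2 * T)) +
          1 / 2 * Real.exp (T / 8) * T * stdNormalCDF ((T / 2 - π) / Real.sqrt T)) := by
        have e1 : Real.sqrt (2*π*T) = Real.sqrt (2*π) * Real.sqrt T := by
          rw [← Real.sqrt_mul (by positivity)]
        have e3 : Real.sqrt (T / (2*π)) = Real.sqrt T / Real.sqrt (2*π) :=
          Real.sqrt_div hT.le _
        have hTT : Real.sqrt T * Real.sqrt T = T := Real.mul_self_sqrt hT.le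
        have he2 : Real.exp (T / 8) * Real.exp (-(π - T/2)^2 / (2*T)) =
            Real.exp (-(π * (π - T)) / (2 * T)) := by
          rw [← Real.exp_add]
          congr 1
          field_simp
          ring
        rw [hM, e1, e3, ← he2]
        set c := Real.sqrt T with hc
        rw [← hTT]
        field_simp
end

section
/- For every fixed real u > 0, the SABR payoff function g(u; σ₀) converges, as σ₀ → ∞, to (π/√2)·cosh(u/2); that is, lim_{σ₀→∞} sinh(u)·∫_0^u sin((σ₀/2)·sinh s)/(sinh s · √(cosh u − cosh s)) ds = (π/√2)·cosh(u/2). -/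
open scoped Real

namespace SabrAux

open scoped FourierTransform
open MeasureTheory Filter Set intervalIntegral


noncomputable def sinc (x : ℝ) : ℝ := if x = 0 then 1 else Real.sin x / x

lemma sinc_eq {x : ℝ} (hx : x ≠ 0) : sinc x = Real.sin x / x := if_neg hx

lemma continuous_sinc : Continuous sinc := by
  rw [continuous_iff_continuousAt]
  intro x
  rcases eq_or_ne x 0 with rfl | hx
  · have h1 : Tendsto (fun y : ℝ => Real.sin y / y) (nhdsWithin 0 {(0:ℝ)}ᶜ) (nhds 1) := by
      have := hasDerivAt_iff_tendsto_slope.mp (Real.hasDerivAt_sin 0)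
      rw [Real.cos_zero] at this
      refine this.congr' ?_
      filter_upwards [self_mem_nhdsWithin] with y hy
      simp [slope_def_field, div_eq_div_iff]
    have h2 : Tendsto sinc (nhdsWithin 0 {(0:ℝ)}ᶜ) (nhds 1) := by
      refine h1.congr' ?_
      filter_upwards [self_mem_nhdsWithin] with y hy
      exact (sinc_eq hy).symm
    have : Tendsto sinc (nhds 0) (nhds 1) := by
      rw [← nhdsNE_sup_pure]
      exact h2.sup (by simpa [sinc] using tendsto_pure_nhds sinc 0)
    simpa [ContinuousAt, sinc] using this
  · have : ContinuousAt (fun y : ℝ => Real.sin y / y) x :=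
      Real.continuous_sin.continuousAt.div continuousAt_id hx
    refine this.congr ?_
    filter_upwards [eventually_ne_nhds hx] with y hy
    exact (sinc_eq hy).symm

/-- partial Dirichlet integral -/
noncomputable def S (X : ℝ) : ℝ := ∫ t in (0:ℝ)..X, sinc t

lemma integral_sinc_comp_mul_left {c : ℝ} (hc : c ≠ 0) (T : ℝ) :
    ∫ x in (0:ℝ)..T, sinc (c * x) = c⁻¹ * S (c * T) := by
  rw [intervalIntegral.integral_comp_mul_left sinc hc, mul_zero, smul_eq_mul, S]

lemma dirichlet_kernel (n : ℕ) (x : ℝ) :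
    Real.sin ((n + 1/2) * x)
      = Real.sin (x/2) * (1 + 2 * ∑ k ∈ Finset.range n, Real.cos ((k+1) * x)) := by
  induction n with
  | zero => simp; ring_nf
  | succ n ih =>
    have key : Real.sin (((n:ℝ) + 1 + 1/2) * x) - Real.sin (((n:ℝ) + 1/2) * x)
        = 2 * Real.sin (x/2) * Real.cos (((n:ℝ)+1) * x) := by
      rw [Real.sin_sub_sin]; ring_nf
    push_cast
    have := key
    rw [Finset.sum_range_succ]
    push_cast
    nlinarith [ih, key]

lemma sin_ge_sub_cube {y : ℝ} (hy : 0 ≤ y) : y - y^3/6 ≤ Real.sin y := by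
  have hd : ∀ t : ℝ, HasDerivAt (fun z : ℝ => Real.sin z - z + z^3/6)
      (Real.cos t - 1 + 3 * t^2 / 6) t := by
    intro t
    have h1 := (Real.hasDerivAt_sin t).sub (hasDerivAt_id t)
    have h2 := (hasDerivAt_pow 3 t).div_const 6
    refine (h1.add h2).congr_deriv ?_
    norm_num
  have hmono : Monotone (fun z : ℝ => Real.sin z - z + z^3/6) := by
    apply monotone_of_deriv_nonneg
    · exact fun t => (hd t).differentiableAt
    · intro t
      rw [(hd t).deriv]
      nlinarith [Real.one_sub_sq_div_two_le_cos (x := t)]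
  have := hmono hy
  simp only [Real.sin_zero] at this
  nlinarith [this]

lemma abs_h_le {x : ℝ} (hx : x ∈ Ioc (0:ℝ) π) :
    |x⁻¹ - (2 * Real.sin (x/2))⁻¹| ≤ π^2/48 := by
  obtain ⟨hx0, hxpi⟩ := hx
  have hpi : (0:ℝ) < π := Real.pi_pos
  have hhalf0 : 0 < x/2 := by linarith
  have hhalfpi : x/2 ≤ π/2 := by linarith
  have ha : 0 < Real.sin (x/2) :=
    Real.sin_pos_of_pos_of_lt_pi hhalf0 (by linarith [Real.pi_gt_three])
  set a := Real.sin (x/2) with ha_def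
  have hle : a ≤ x/2 := by simpa using Real.sin_le hhalf0.le
  have hcube : x/2 - (x/2)^3/6 ≤ a := sin_ge_sub_cube hhalf0.le
  have hjordan : 2/π * (x/2) ≤ a := Real.mul_le_sin hhalf0.le hhalfpi
  have heq : x⁻¹ - (2*a)⁻¹ = (2*a - x) / (x*(2*a)) := by
    rw [inv_eq_one_div, inv_eq_one_div, div_sub_div _ _ hx0.ne' (by positivity)]
    ring_nf
  rw [heq, abs_div]
  have hnum_nonneg : 0 ≤ x - 2*a := by linarith
  have hden_pos : 0 < x*(2*a) := by positivity
  rw [abs_of_nonpos (by linarith : 2*a - x ≤ 0), abs_of_pos hden_pos, neg_sub]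
  have hnum : x - 2*a ≤ x^3/24 := by nlinarith
  have hxpi' : x/π ≤ a := by
    have : 2/π * (x/2) = x/π := by ring
    linarith [hjordan, this.symm.le]
  have hden : 2*x^2/π ≤ x*(2*a) := by
    have h1 : x/π * x ≤ a * x := mul_le_mul_of_nonneg_right hxpi' hx0.le
    have h2 : 2*(x/π*x) = 2*x^2/π := by ring
    nlinarith
  have hden2 : 0 < 2*x^2/π := by positivity
  calc (x - 2*a)/(x*(2*a)) ≤ (x^3/24)/(2*x^2/π) :=
        div_le_div₀ (by positivity) hnum hden2 hden
    _ = π * x / 48 := by field_simp; ring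
    _ ≤ π^2/48 := by nlinarith



lemma tendsto_integral_sin_mul (f : ℝ → ℝ) (hf : Integrable f) :
    Tendsto (fun lam : ℝ => ∫ x : ℝ, Real.sin (lam * x) * f x) atTop (nhds 0) := by
  set F : ℝ → ℂ := fun x => (f x : ℂ) with hF_def
  have hF : Integrable F := hf.ofReal
  have key : ∀ w : ℝ, (𝓕 F w).im = ∫ x : ℝ, -(Real.sin (2*π*(x*w)) * f x) := by
    intro w
    rw [Real.fourier_real_eq]
    have hint : Integrable fun v : ℝ => 𝐞 (-(v*w)) • F v :=
      by simpa [mul_comm] using (Real.fourierIntegral_convergent_iff w).2 hF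
    rw [show (∫ (v : ℝ), 𝐞 (-(v * w)) • F v).im
        = ∫ v : ℝ, (𝐞 (-(v*w)) • F v).im from
      (Complex.imCLM.integral_comp_comm hint).symm]
    congr 1
    funext v
    simp only [Circle.smul_def, Real.fourierChar_apply, hF_def]
    rw [show (2:ℝ) * π * -(v * w) = -(2*π*(v*w)) by ring]
    simp [smul_eq_mul, Complex.mul_im, Complex.exp_ofReal_mul_I_im,
      Complex.exp_ofReal_mul_I_re, Real.sin_neg]
    rw [show -((2:ℂ) * ↑π * (↑v * ↑w) * Complex.I) = ((-(2*π*(v*w)):ℝ):ℂ) * Complex.I by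
      push_cast; ring]
    rw [Complex.exp_ofReal_mul_I_im, Real.sin_neg]
    ring
  have h1 : Tendsto (fun lam : ℝ => lam/(2*π)) atTop atTop :=
    tendsto_id.atTop_div_const (by positivity)
  have h2 : Tendsto (𝓕 F) (cocompact ℝ) (nhds 0) := Real.zero_at_infty_fourier F
  have h3 : Tendsto (fun lam : ℝ => 𝓕 F (lam/(2*π))) atTop (nhds 0) :=
    h2.comp (h1.mono_right (by rw [cocompact_eq_atBot_atTop]; exact le_sup_right))
  have h4 : Tendsto (fun lam : ℝ => -(𝓕 F (lam/(2*π))).im) atTop (nhds 0) := by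
    have := (Complex.continuous_im.tendsto 0).comp h3
    simpa using this.neg
  refine h4.congr fun lam => ?_
  rw [key, MeasureTheory.integral_neg, neg_neg]
  congr 1; funext x
  have hπ : (π:ℝ) ≠ 0 := Real.pi_ne_zero
  congr 1
  field_simp


noncomputable def hfun (x : ℝ) : ℝ := x⁻¹ - (2 * Real.sin (x/2))⁻¹

noncomputable def H : ℝ → ℝ := (Ioc (0:ℝ) π).indicator hfun

lemma measurable_hfun : Measurable hfun := by
  unfold hfun
  fun_prop

lemma integrable_H : Integrable H := by
  refine Integrable.mono' (g := (Ioc (0:ℝ) π).indicator fun _ => π^2/48) ?_ ?_ ?_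
  · rw [integrable_indicator_iff measurableSet_Ioc]
    exact integrableOn_const measure_Ioc_lt_top.ne
  · exact ((measurable_hfun).indicator measurableSet_Ioc).aestronglyMeasurable
  · refine ae_of_all _ fun x => ?_
    by_cases hx : x ∈ Ioc (0:ℝ) π
    · simp only [H, indicator_of_mem hx, Real.norm_eq_abs]
      exact abs_h_le hx
    · simp [H, indicator_of_notMem hx]

lemma integral_dirichlet (n : ℕ) :
    ∫ x in (0:ℝ)..π, Real.sin (((n:ℝ) + 1/2) * x) * (2 * Real.sin (x/2))⁻¹ = π/2 := by
  have hπ := Real.pi_pos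
  have hcongr : ∀ x ∈ Set.uIoc (0:ℝ) π,
      Real.sin (((n:ℝ) + 1/2) * x) * (2 * Real.sin (x/2))⁻¹
        = 1/2 + ∑ k ∈ Finset.range n, Real.cos (((k:ℝ)+1) * x) := by
    intro x hx
    rw [Set.uIoc_of_le hπ.le] at hx
    have hs : Real.sin (x/2) ≠ 0 :=
      ne_of_gt (Real.sin_pos_of_pos_of_lt_pi (by linarith [hx.1]) (by linarith [hx.2]))
    rw [dirichlet_kernel]
    field_simp
  rw [intervalIntegral.integral_congr_ae (ae_of_all _ hcongr)]
  have hsum_cont : Continuous fun x : ℝ => ∑ k ∈ Finset.range n, Real.cos (((k:ℝ)+1) * x) := by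
    exact continuous_finset_sum _ fun k _ => Real.continuous_cos.comp (continuous_const.mul continuous_id)
  rw [intervalIntegral.integral_add intervalIntegrable_const
    (hsum_cont.intervalIntegrable _ _)]
  rw [intervalIntegral.integral_finset_sum fun k (_ : k ∈ Finset.range n) =>
    ((by continuity : Continuous fun x : ℝ => Real.cos (((k:ℝ)+1) * x)).intervalIntegrable
      (0:ℝ) π)]
  have hzero : ∀ k : ℕ, (∫ x in (0:ℝ)..π, Real.cos (((k:ℝ)+1) * x)) = 0 := by
    intro k
    have hk : ((k:ℝ)+1) ≠ 0 := by positivity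
    rw [intervalIntegral.integral_comp_mul_left Real.cos hk]
    rw [mul_zero, integral_cos, Real.sin_zero]
    rw [show ((k:ℝ)+1) * π = ((k+1 : ℕ) : ℝ) * π by push_cast; ring]
    rw [Real.sin_nat_mul_pi]
    simp
  simp only [hzero, Finset.sum_const_zero, add_zero]
  simp
  ring

lemma integral_sin_div_x (lam : ℝ) (hlam : 0 < lam) :
    ∫ x in (0:ℝ)..π, Real.sin (lam * x) * x⁻¹ = S (lam * π) := by
  have hπ := Real.pi_pos
  have hcongr : ∀ x ∈ Set.uIoc (0:ℝ) π,
      Real.sin (lam * x) * x⁻¹ = lam * sinc (lam * x) := by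
    intro x hx
    rw [Set.uIoc_of_le hπ.le] at hx
    have hx0 : x ≠ 0 := ne_of_gt hx.1
    have : lam * x ≠ 0 := by positivity
    rw [sinc_eq this]
    field_simp
  rw [intervalIntegral.integral_congr_ae (ae_of_all _ hcongr),
    intervalIntegral.integral_const_mul, integral_sinc_comp_mul_left hlam.ne' π]
  field_simp

lemma intervalIntegrable_sin_mul_hfun (lam : ℝ) :
    IntervalIntegrable (fun x => Real.sin (lam * x) * hfun x) volume 0 π := by
  have hπ := Real.pi_pos
  rw [intervalIntegrable_iff_integrableOn_Ioc_of_le hπ.le]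
  have h1 : IntegrableOn hfun (Ioc (0:ℝ) π) :=
    (integrable_indicator_iff measurableSet_Ioc).1 integrable_H
  refine h1.bdd_mul (c := 1) ?_ (ae_of_all _ fun x => by simpa using Real.abs_sin_le_one _)
  exact (Real.continuous_sin.comp (continuous_const.mul continuous_id)).aestronglyMeasurable

lemma integral_sin_mul_hfun_eq (lam : ℝ) :
    ∫ x in (0:ℝ)..π, Real.sin (lam * x) * hfun x = ∫ x : ℝ, Real.sin (lam * x) * H x := by
  have hπ := Real.pi_pos
  rw [intervalIntegral.integral_of_le hπ.le, ← MeasureTheory.integral_indicator measurableSet_Ioc]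
  congr 1
  funext x
  by_cases hx : x ∈ Ioc (0:ℝ) π
  · simp [H, indicator_of_mem hx]
  · simp [H, indicator_of_notMem hx]

lemma tendsto_S_seq :
    Tendsto (fun n : ℕ => S (((n:ℝ) + 1/2) * π)) atTop (nhds (π/2)) := by
  have hπ := Real.pi_pos
  have hmain : ∀ n : ℕ, S (((n:ℝ) + 1/2) * π)
      = π/2 + ∫ x : ℝ, Real.sin (((n:ℝ) + 1/2) * x) * H x := by
    intro n
    have hlam : (0:ℝ) < (n:ℝ) + 1/2 := by positivity
    rw [← integral_sin_div_x _ hlam, ← integral_dirichlet n, ← integral_sin_mul_hfun_eq]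
    have hsplit : ∀ x : ℝ, x ∈ Set.uIoc (0:ℝ) π →
        Real.sin (((n:ℝ) + 1/2) * x) * x⁻¹
          = Real.sin (((n:ℝ) + 1/2) * x) * hfun x
            + Real.sin (((n:ℝ) + 1/2) * x) * (2 * Real.sin (x/2))⁻¹ := by
      intro x _
      unfold hfun
      ring
    rw [intervalIntegral.integral_congr_ae (ae_of_all _ hsplit)]
    have hint2 : IntervalIntegrable
        (fun x => Real.sin (((n:ℝ) + 1/2) * x) * (2 * Real.sin (x/2))⁻¹) volume 0 π := by
      rw [intervalIntegrable_iff_integrableOn_Ioc_of_le hπ.le]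
      have hcont : Continuous fun x : ℝ =>
          (1:ℝ)/2 + ∑ k ∈ Finset.range n, Real.cos (((k:ℝ)+1) * x) :=
        continuous_const.add (continuous_finset_sum _ fun k _ =>
          Real.continuous_cos.comp (continuous_const.mul continuous_id))
      refine (hcont.integrableOn_Ioc).congr_fun ?_ measurableSet_Ioc
      intro x hx
      have hs : Real.sin (x/2) ≠ 0 :=
        ne_of_gt (Real.sin_pos_of_pos_of_lt_pi (by linarith [hx.1]) (by linarith [hx.2]))
      show (1:ℝ)/2 + ∑ k ∈ Finset.range n, Real.cos (((k:ℝ)+1) * x)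
          = Real.sin (((n:ℝ) + 1/2) * x) * (2 * Real.sin (x/2))⁻¹
      rw [eq_comm, dirichlet_kernel]
      field_simp
    rw [intervalIntegral.integral_add (intervalIntegrable_sin_mul_hfun _) hint2]
    ring
  have hrl := tendsto_integral_sin_mul H integrable_H
  have hcomp : Tendsto (fun n : ℕ => ((n:ℝ) + 1/2)) atTop atTop :=
    tendsto_atTop_add_const_right _ _ tendsto_natCast_atTop_atTop
  have := hrl.comp hcomp
  simp only [Function.comp_def] at this
  have : Tendsto (fun n : ℕ => π/2 + ∫ x : ℝ, Real.sin (((n:ℝ) + 1/2) * x) * H x)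
      atTop (nhds (π/2 + 0)) := tendsto_const_nhds.add this
  rw [add_zero] at this
  exact this.congr fun n => (hmain n).symm

lemma S_diff {X Y : ℝ} (hY : 1 ≤ Y) (hYX : Y ≤ X) : |S X - S Y| ≤ 2 / Y := by
  have hY0 : (0:ℝ) < Y := by linarith
  have hX0 : (0:ℝ) < X := by linarith
  have hsub : S X - S Y = ∫ t in Y..X, sinc t := by
    unfold S
    exact intervalIntegral.integral_interval_sub_left
      (continuous_sinc.intervalIntegrable _ _) (continuous_sinc.intervalIntegrable _ _)
  have hcongr : ∀ t ∈ Set.uIcc Y X, sinc t = t⁻¹ * Real.sin t := by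
    intro t ht
    rw [Set.uIcc_of_le hYX] at ht
    have : t ≠ 0 := by intro h; rw [h] at ht; linarith [ht.1]
    rw [sinc_eq this]; field_simp
  have hne : ∀ t ∈ Set.uIcc Y X, t ≠ 0 := by
    intro t ht
    rw [Set.uIcc_of_le hYX] at ht
    intro h; rw [h] at ht; linarith [ht.1]
  have hparts :
      ∫ t in Y..X, t⁻¹ * Real.sin t
        = X⁻¹ * (-Real.cos X) - Y⁻¹ * (-Real.cos Y)
          - ∫ t in Y..X, -(t^2)⁻¹ * (-Real.cos t) := by
    have hu : ∀ t ∈ Set.uIcc Y X, HasDerivAt (fun y : ℝ => y⁻¹) (-(t^2)⁻¹) t :=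
      fun t ht => hasDerivAt_inv (hne t ht)
    have hv : ∀ t ∈ Set.uIcc Y X, HasDerivAt (fun y : ℝ => -Real.cos y) (Real.sin t) t :=
      fun t ht => (Real.hasDerivAt_cos t).neg.congr_deriv (neg_neg _)
    have hiu : IntervalIntegrable (fun t : ℝ => -(t^2)⁻¹) volume Y X := by
      refine (ContinuousOn.intervalIntegrable ?_)
      exact ContinuousOn.neg (ContinuousOn.inv₀ (continuousOn_pow 2)
        (fun t ht => pow_ne_zero 2 (hne t ht)))
    exact intervalIntegral.integral_mul_deriv_eq_deriv_mul hu hv hiu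
      (Real.continuous_sin.intervalIntegrable _ _)
  have habs : |∫ t in Y..X, -(t^2)⁻¹ * (-Real.cos t)| ≤ Y⁻¹ - X⁻¹ := by
    have heq : ∀ t : ℝ, -(t^2)⁻¹ * (-Real.cos t) = (t^2)⁻¹ * Real.cos t := by intro t; ring
    simp only [heq]
    have h1 : |∫ t in Y..X, (t^2)⁻¹ * Real.cos t| ≤ ∫ t in Y..X, |(t^2)⁻¹ * Real.cos t| :=
      intervalIntegral.abs_integral_le_integral_abs hYX
    have hint1 : IntervalIntegrable (fun t => |(t^2)⁻¹ * Real.cos t|) volume Y X := by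
      refine (ContinuousOn.intervalIntegrable ?_)
      refine ContinuousOn.abs (ContinuousOn.mul (ContinuousOn.inv₀ (continuousOn_pow 2)
        (fun t ht => pow_ne_zero 2 (hne t ht)))
        Real.continuous_cos.continuousOn)
    have hint2 : IntervalIntegrable (fun t => (t^2)⁻¹) volume Y X := by
      refine (ContinuousOn.intervalIntegrable ?_)
      exact ContinuousOn.inv₀ (continuousOn_pow 2) (fun t ht => pow_ne_zero 2 (hne t ht))
    have h2 : ∫ t in Y..X, |(t^2)⁻¹ * Real.cos t| ≤ ∫ t in Y..X, (t^2)⁻¹ := by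
      refine intervalIntegral.integral_mono_on hYX hint1 hint2 fun t ht => ?_
      have ht0 : (0:ℝ) < t := lt_of_lt_of_le (by linarith) ht.1
      rw [abs_mul]
      have : |(t^2)⁻¹| = (t^2)⁻¹ := abs_of_pos (by positivity)
      rw [this]
      nlinarith [Real.abs_cos_le_one t, sq_nonneg t, abs_nonneg (Real.cos t),
        inv_pos.2 (pow_pos ht0 2)]
    have h3 : ∫ t in Y..X, (t^2)⁻¹ = Y⁻¹ - X⁻¹ := by
      have hzp : ∀ t ∈ Set.uIcc Y X, (t^2)⁻¹ = t ^ (-2 : ℤ) := by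
        intro t ht
        rw [zpow_neg, show ((2:ℤ)) = ((2:ℕ):ℤ) from rfl, zpow_natCast]
      rw [intervalIntegral.integral_congr hzp, integral_zpow (Or.inr ⟨by norm_num,
        fun h => hne 0 h rfl⟩)]
      norm_num
      ring
    linarith
  rw [hsub, intervalIntegral.integral_congr hcongr, hparts]
  have hcX : |X⁻¹ * Real.cos X| ≤ X⁻¹ := by
    rw [abs_mul, abs_of_pos (inv_pos.2 hX0)]
    nlinarith [Real.abs_cos_le_one X, inv_pos.2 hX0]
  have hcY : |Y⁻¹ * Real.cos Y| ≤ Y⁻¹ := by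
    rw [abs_mul, abs_of_pos (inv_pos.2 hY0)]
    nlinarith [Real.abs_cos_le_one Y, inv_pos.2 hY0]
  have hXY : X⁻¹ ≤ Y⁻¹ := by
    apply inv_anti₀ hY0 hYX
  have h2Y : 2/Y = Y⁻¹ + Y⁻¹ := by rw [div_eq_mul_inv]; ring
  calc |X⁻¹ * (-Real.cos X) - Y⁻¹ * (-Real.cos Y) - ∫ t in Y..X, -(t^2)⁻¹ * (-Real.cos t)|
      ≤ |X⁻¹ * (-Real.cos X)| + |Y⁻¹ * (-Real.cos Y)|
          + |∫ t in Y..X, -(t^2)⁻¹ * (-Real.cos t)| := by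
        exact (abs_sub _ _).trans (by gcongr; exact abs_sub _ _)
    _ ≤ X⁻¹ + Y⁻¹ + (Y⁻¹ - X⁻¹) := by
        have e1 : |X⁻¹ * (-Real.cos X)| = |X⁻¹ * Real.cos X| := by rw [mul_neg, abs_neg]
        have e2 : |Y⁻¹ * (-Real.cos Y)| = |Y⁻¹ * Real.cos Y| := by rw [mul_neg, abs_neg]
        rw [e1, e2]
        linarith [hcX, hcY, habs]
    _ ≤ 2/Y := by rw [h2Y]; linarith

lemma tendsto_S : Tendsto S atTop (nhds (π/2)) := by
  have hπ := Real.pi_pos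
  have hbound : ∀ X : ℝ, 1 ≤ X → |S X - π/2| ≤ 2/X := by
    intro X hX
    have hlim : Tendsto (fun n : ℕ => |S X - S (((n:ℝ) + 1/2) * π)|) atTop
        (nhds (|S X - π/2|)) := (Filter.Tendsto.abs (tendsto_const_nhds.sub tendsto_S_seq))
    refine le_of_tendsto hlim ?_
    have hev : ∀ᶠ n : ℕ in atTop, X ≤ ((n:ℝ) + 1/2) * π := by
      have ht : Tendsto (fun n : ℕ => ((n:ℝ) + 1/2) * π) atTop atTop :=
        Tendsto.atTop_mul_const hπ
          (tendsto_atTop_add_const_right _ _ tendsto_natCast_atTop_atTop)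
      exact ht.eventually_ge_atTop X
    filter_upwards [hev] with n hn
    rw [abs_sub_comm]
    exact S_diff hX hn
  have hzero : Tendsto (fun X : ℝ => 2/X) atTop (nhds 0) := by
    simpa using tendsto_const_nhds.div_atTop (tendsto_id (α := ℝ))
  have : Tendsto (fun X => S X - π/2) atTop (nhds 0) := by
    refine squeeze_zero_norm' ?_ hzero
    filter_upwards [eventually_ge_atTop (1:ℝ)] with X hX
    simpa [Real.norm_eq_abs] using hbound X hX
  have := this.add_const (π/2)
  simpa using this

noncomputable def cC (u : ℝ) : ℝ := (Real.sqrt (Real.cosh u - 1))⁻¹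

noncomputable def rr (u s : ℝ) : ℝ :=
  (Real.sinh s * Real.sqrt (Real.cosh u - Real.cosh s))⁻¹
    - cC u * Real.cosh s / Real.sinh s

noncomputable def K (u : ℝ) : ℝ :=
  ((Real.cosh u - 1) * Real.sqrt ((Real.cosh u - 1)/u))⁻¹

noncomputable def rho (u : ℝ) : ℝ → ℝ :=
  (Ioo (0:ℝ) (Real.sinh u)).indicator
    (fun y => rr u (Real.arsinh y) / Real.cosh (Real.arsinh y))

lemma cosh_convex : ConvexOn ℝ Set.univ Real.cosh := by
  have h2 : deriv^[2] Real.cosh = Real.cosh := by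
    have h0 : deriv^[2] Real.cosh = deriv (deriv Real.cosh) := by
      rw [Function.iterate_succ, Function.iterate_one]; rfl
    rw [h0, Real.deriv_cosh, Real.deriv_sinh]
  refine convexOn_of_deriv2_nonneg convex_univ Real.continuous_cosh.continuousOn
    Real.differentiable_cosh.differentiableOn ?_ ?_
  · rw [Real.deriv_cosh]
    exact Real.differentiable_sinh.differentiableOn
  · intro x _
    rw [h2]
    exact (Real.cosh_pos x).le

lemma cosh_lower {u : ℝ} (hu : 0 < u) {s : ℝ} (hs0 : 0 ≤ s) (hsu : s ≤ u) :
    (Real.cosh u - 1) * ((u - s)/u) ≤ Real.cosh u - Real.cosh s := by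
  have h := cosh_convex.2 (Set.mem_univ (0:ℝ)) (Set.mem_univ u)
    (show (0:ℝ) ≤ (u-s)/u from div_nonneg (by linarith) hu.le)
    (show (0:ℝ) ≤ s/u from div_nonneg hs0 hu.le)
    (show (u-s)/u + s/u = 1 by field_simp; ring)
  simp only [smul_eq_mul, mul_zero, zero_add, Real.cosh_zero, mul_one] at h
  have harg : s/u * u = s := by field_simp
  rw [harg] at h
  have e : (Real.cosh u - 1) * ((u-s)/u)
      = Real.cosh u - ((u-s)/u + s/u * Real.cosh u) := by field_simp; ring
  rw [e]
  linarith

lemma cosh_sub_pos {u s : ℝ} (hs : s ∈ Ioo 0 u) : 0 < Real.cosh u - Real.cosh s := by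
  have : Real.cosh s < Real.cosh u := by
    rw [Real.cosh_lt_cosh, abs_of_pos hs.1, abs_of_pos (hs.1.trans hs.2)]
    exact hs.2
  linarith

lemma cosh_sub_one_lt_sinh {s : ℝ} (hs : 0 < s) : Real.cosh s - 1 < Real.sinh s := by
  have h1 : Real.exp (-s) < 1 := Real.exp_lt_one_iff.2 (by linarith)
  rw [Real.cosh_eq, Real.sinh_eq]
  linarith

lemma abs_key_bound {sh a b ch : ℝ} (hsh : 0 < sh) (ha : 0 < a) (hb : 0 < b)
    (hch : 1 ≤ ch) (hT : ch - 1 ≤ sh) (hsq : b^2 - a^2 = ch - 1) :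
    |(sh*a)⁻¹ - b⁻¹*ch/sh| ≤ b⁻¹ + (b^2*a)⁻¹ := by
  have e0 : (sh*a)⁻¹ - b⁻¹*ch/sh = sh⁻¹ * ((a⁻¹ - b⁻¹) - (ch-1)*b⁻¹) := by
    rw [mul_inv]; ring
  have e1 : a⁻¹ - b⁻¹ = (ch - 1)/(a*b*(a+b)) := by
    have hba : (b - a)*(a + b) = ch - 1 := by nlinarith [hsq]
    rw [inv_sub_inv ha.ne' hb.ne',
      div_eq_div_iff (by positivity : a*b ≠ 0) (by positivity : a*b*(a+b) ≠ 0)]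
    linear_combination (a*b) * hba
  have hTT : sh⁻¹ * (ch - 1) ≤ 1 := by
    have h1 : sh⁻¹ * (ch - 1) ≤ sh⁻¹ * sh := by
      apply mul_le_mul_of_nonneg_left hT (by positivity)
    rwa [inv_mul_cancel₀ hsh.ne'] at h1
  have hch0 : 0 ≤ ch - 1 := by linarith
  rw [e0, abs_mul, abs_of_pos (inv_pos.2 hsh)]
  have habs : |(a⁻¹ - b⁻¹) - (ch-1)*b⁻¹|
      ≤ (ch-1)/(a*b*(a+b)) + (ch-1)*b⁻¹ := by
    refine (abs_sub _ _).trans ?_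
    rw [e1, abs_of_nonneg (by positivity), abs_of_nonneg (by positivity)]
  have hmul := mul_le_mul_of_nonneg_left habs (by positivity : (0:ℝ) ≤ sh⁻¹)
  refine hmul.trans ?_
  have t2 : sh⁻¹ * ((ch-1)*b⁻¹) ≤ b⁻¹ := by
    have : sh⁻¹ * ((ch-1)*b⁻¹) = (sh⁻¹*(ch-1))*b⁻¹ := by ring
    rw [this]
    calc (sh⁻¹*(ch-1))*b⁻¹ ≤ 1 * b⁻¹ :=
          mul_le_mul_of_nonneg_right hTT (by positivity)
      _ = b⁻¹ := one_mul _
  have t1 : sh⁻¹ * ((ch-1)/(a*b*(a+b))) ≤ (b^2*a)⁻¹ := by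
    have e2 : sh⁻¹ * ((ch-1)/(a*b*(a+b))) = (sh⁻¹*(ch-1)) * (a*b*(a+b))⁻¹ := by
      rw [div_eq_mul_inv]; ring
    rw [e2]
    have hle : (a*b*(a+b))⁻¹ ≤ (b^2*a)⁻¹ := by
      apply inv_anti₀ (by positivity)
      nlinarith
    calc (sh⁻¹*(ch-1)) * (a*b*(a+b))⁻¹ ≤ 1 * (b^2*a)⁻¹ := by
          apply mul_le_mul hTT hle (by positivity) (by norm_num)
      _ = (b^2*a)⁻¹ := one_mul _
  calc sh⁻¹ * ((ch-1)/(a*b*(a+b)) + (ch-1)*b⁻¹)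
      = sh⁻¹ * ((ch-1)/(a*b*(a+b))) + sh⁻¹ * ((ch-1)*b⁻¹) := by ring
    _ ≤ (b^2*a)⁻¹ + b⁻¹ := add_le_add t1 t2
    _ = b⁻¹ + (b^2*a)⁻¹ := by ring

lemma rr_bound {u : ℝ} (hu : 0 < u) {s : ℝ} (hs : s ∈ Ioo 0 u) :
    |rr u s| ≤ cC u + K u * (Real.sqrt (u - s))⁻¹ := by
  have hA : 0 < Real.cosh u - Real.cosh s := cosh_sub_pos hs
  have hB : 0 < Real.cosh u - 1 := by
    have := Real.one_lt_cosh.2 hu.ne'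
    linarith
  have hsh : 0 < Real.sinh s := Real.sinh_pos_iff.2 hs.1
  have hch : 1 ≤ Real.cosh s := (Real.one_lt_cosh.2 hs.1.ne').le
  have ha : 0 < Real.sqrt (Real.cosh u - Real.cosh s) := Real.sqrt_pos.2 hA
  have hb : 0 < Real.sqrt (Real.cosh u - 1) := Real.sqrt_pos.2 hB
  have hsq : Real.sqrt (Real.cosh u - 1)^2 - Real.sqrt (Real.cosh u - Real.cosh s)^2
      = Real.cosh s - 1 := by
    rw [Real.sq_sqrt hB.le, Real.sq_sqrt hA.le]; ring
  have hkey := abs_key_bound hsh ha hb hch (by linarith [cosh_sub_one_lt_sinh hs.1]) hsq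
  have hrr : rr u s = (Real.sinh s * Real.sqrt (Real.cosh u - Real.cosh s))⁻¹
      - (Real.sqrt (Real.cosh u - 1))⁻¹ * Real.cosh s / Real.sinh s := rfl
  rw [hrr]
  refine hkey.trans ?_
  have heC : (Real.sqrt (Real.cosh u - 1))⁻¹ = cC u := rfl
  rw [heC]
  have hmono : Real.sqrt ((Real.cosh u - 1)/u * (u - s))
      ≤ Real.sqrt (Real.cosh u - Real.cosh s) := by
    apply Real.sqrt_le_sqrt
    have := cosh_lower hu hs.1.le hs.2.le
    calc (Real.cosh u - 1)/u * (u - s) = (Real.cosh u - 1) * ((u - s)/u) := by ring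
      _ ≤ Real.cosh u - Real.cosh s := this
  have hsplit : Real.sqrt ((Real.cosh u - 1)/u * (u - s))
      = Real.sqrt ((Real.cosh u - 1)/u) * Real.sqrt (u - s) := by
    rw [Real.sqrt_mul (by positivity)]
  have hus : 0 < u - s := by linarith [hs.2]
  have hpos : 0 < Real.sqrt ((Real.cosh u - 1)/u * (u - s)) := by
    apply Real.sqrt_pos.2; positivity
  have hinv : (Real.sqrt (Real.cosh u - Real.cosh s))⁻¹
      ≤ (Real.sqrt ((Real.cosh u - 1)/u * (u - s)))⁻¹ :=
    inv_anti₀ hpos hmono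
  have hfin : (Real.sqrt (Real.cosh u - 1)^2 * Real.sqrt (Real.cosh u - Real.cosh s))⁻¹
      ≤ K u * (Real.sqrt (u - s))⁻¹ := by
    rw [Real.sq_sqrt hB.le]
    have e3 : K u * (Real.sqrt (u - s))⁻¹
        = ((Real.cosh u - 1) * (Real.sqrt ((Real.cosh u - 1)/u) * Real.sqrt (u - s)))⁻¹ := by
      rw [K, mul_inv, mul_inv, mul_inv]; ring
    rw [e3, ← hsplit, mul_inv, mul_inv]
    apply mul_le_mul_of_nonneg_left hinv (by positivity)
  linarith [hfin]

lemma integrableOn_inv_sqrt_sub {u : ℝ} (hu : 0 < u) :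
    IntegrableOn (fun s : ℝ => (Real.sqrt (u - s))⁻¹) (Ioo 0 u) := by
  have h1 : IntervalIntegrable (fun x : ℝ => x ^ (-(1/2) : ℝ)) volume 0 u :=
    intervalIntegral.intervalIntegrable_rpow' (by norm_num)
  have h2 := (h1.comp_sub_left u).symm
  -- h2 : IntervalIntegrable (fun x => (u - x) ^ (-(1/2):ℝ)) volume (u - u) (u - 0) .symm'ed
  have h3 : IntervalIntegrable (fun x : ℝ => (u - x) ^ (-(1/2) : ℝ)) volume 0 u := by
    simpa using h2
  rw [intervalIntegrable_iff_integrableOn_Ioc_of_le hu.le] at h3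
  refine ((h3.mono_set Ioo_subset_Ioc_self).congr_fun ?_ measurableSet_Ioo)
  intro s hs
  have hus : 0 < u - s := by linarith [hs.2]
  show (u - s) ^ (-(1/2) : ℝ) = (Real.sqrt (u - s))⁻¹
  rw [Real.sqrt_eq_rpow, ← Real.rpow_neg hus.le]

lemma integrable_rr_bound {u : ℝ} (hu : 0 < u) :
    IntegrableOn (fun s : ℝ => cC u + K u * (Real.sqrt (u - s))⁻¹) (Ioo 0 u) := by
  apply Integrable.add
  · exact integrableOn_const measure_Ioo_lt_top.ne
  · exact (integrableOn_inv_sqrt_sub hu).const_mul _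

lemma continuousOn_rr {u : ℝ} (hu : 0 < u) : ContinuousOn (rr u) (Ioo 0 u) := by
  have hsh : ∀ s ∈ Ioo (0:ℝ) u, Real.sinh s ≠ 0 :=
    fun s hs => (Real.sinh_pos_iff.2 hs.1).ne'
  have hA : ∀ s ∈ Ioo (0:ℝ) u, Real.sqrt (Real.cosh u - Real.cosh s) ≠ 0 :=
    fun s hs => (Real.sqrt_pos.2 (cosh_sub_pos hs)).ne'
  apply ContinuousOn.sub
  · apply ContinuousOn.inv₀
    · exact (Real.continuous_sinh.continuousOn.mul
        ((Real.continuous_sqrt.comp (continuous_const.sub Real.continuous_cosh)).continuousOn))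
    · intro s hs
      exact mul_ne_zero (hsh s hs) (hA s hs)
  · exact ContinuousOn.div
      ((continuous_const.mul Real.continuous_cosh).continuousOn)
      Real.continuous_sinh.continuousOn hsh

lemma integrableOn_rr {u : ℝ} (hu : 0 < u) : IntegrableOn (rr u) (Ioo 0 u) := by
  refine Integrable.mono' (integrable_rr_bound hu)
    ((continuousOn_rr hu).aestronglyMeasurable measurableSet_Ioo) ?_
  refine (ae_restrict_iff' measurableSet_Ioo).2 (ae_of_all _ fun s hs => ?_)
  simpa [Real.norm_eq_abs] using rr_bound hu hs

lemma image_sinh_Ioo {u : ℝ} : Real.sinh '' (Ioo 0 u) = Ioo 0 (Real.sinh u) := by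
  ext y
  simp only [Set.mem_image, Set.mem_Ioo]
  constructor
  · rintro ⟨s, ⟨h1, h2⟩, rfl⟩
    exact ⟨Real.sinh_pos_iff.2 h1, Real.sinh_lt_sinh.2 h2⟩
  · rintro ⟨h1, h2⟩
    refine ⟨Real.arsinh y, ⟨Real.arsinh_pos_iff.2 h1, ?_⟩, Real.sinh_arsinh y⟩
    rw [← Real.arsinh_sinh u]
    exact Real.arsinh_lt_arsinh.2 h2

lemma sinh_hasDerivWithinAt {u : ℝ} :
    ∀ s ∈ Ioo (0:ℝ) u, HasDerivWithinAt Real.sinh (Real.cosh s) (Ioo 0 u) s :=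
  fun s _ => (Real.hasDerivAt_sinh s).hasDerivWithinAt

lemma key_cov {u : ℝ} (hu : 0 < u) (lam : ℝ) :
    ∫ s in Ioo (0:ℝ) u, Real.sin (lam * Real.sinh s) * rr u s
      = ∫ y : ℝ, Real.sin (lam * y) * rho u y := by
  have h := integral_image_eq_integral_abs_deriv_smul measurableSet_Ioo
    (sinh_hasDerivWithinAt (u := u)) Real.sinh_injective.injOn
    (fun y => Real.sin (lam * y) * (rr u (Real.arsinh y) / Real.cosh (Real.arsinh y)))
  rw [image_sinh_Ioo] at h
  have hL : ∫ y in Ioo (0:ℝ) (Real.sinh u),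
      Real.sin (lam * y) * (rr u (Real.arsinh y) / Real.cosh (Real.arsinh y))
      = ∫ y : ℝ, Real.sin (lam * y) * rho u y := by
    rw [← MeasureTheory.integral_indicator measurableSet_Ioo]
    congr 1
    funext y
    by_cases hy : y ∈ Ioo (0:ℝ) (Real.sinh u)
    · simp [rho, Set.indicator_of_mem hy]
    · simp [rho, Set.indicator_of_notMem hy]
  have hR : ∫ s in Ioo (0:ℝ) u, |Real.cosh s| •
      (Real.sin (lam * Real.sinh s) *
        (rr u (Real.arsinh (Real.sinh s)) / Real.cosh (Real.arsinh (Real.sinh s))))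
      = ∫ s in Ioo (0:ℝ) u, Real.sin (lam * Real.sinh s) * rr u s := by
    refine MeasureTheory.setIntegral_congr_fun measurableSet_Ioo fun s hs => ?_
    rw [Real.arsinh_sinh, abs_of_pos (Real.cosh_pos s), smul_eq_mul]
    field_simp
  rw [← hL, ← hR, h]

lemma integrable_rho {u : ℝ} (hu : 0 < u) : Integrable (rho u) := by
  rw [rho, integrable_indicator_iff measurableSet_Ioo]
  have h := integrableOn_image_iff_integrableOn_abs_deriv_smul measurableSet_Ioo
    (sinh_hasDerivWithinAt (u := u)) Real.sinh_injective.injOn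
    (fun y => rr u (Real.arsinh y) / Real.cosh (Real.arsinh y))
  rw [image_sinh_Ioo] at h
  rw [h]
  refine (integrableOn_rr hu).congr_fun ?_ measurableSet_Ioo
  intro s hs
  symm
  show |Real.cosh s| •
      (rr u (Real.arsinh (Real.sinh s)) / Real.cosh (Real.arsinh (Real.sinh s))) = rr u s
  rw [Real.arsinh_sinh, abs_of_pos (Real.cosh_pos s), smul_eq_mul]
  field_simp

lemma integral_main_term {u : ℝ} (hu : 0 < u) {lam : ℝ} (hlam : 0 < lam) :
    ∫ s in (0:ℝ)..u, Real.sin (lam * Real.sinh s) * (Real.cosh s / Real.sinh s)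
      = S (lam * Real.sinh u) := by
  have hcongr : ∀ s ∈ Set.uIoc (0:ℝ) u,
      Real.sin (lam * Real.sinh s) * (Real.cosh s / Real.sinh s)
        = (fun x => lam * Real.cosh x) s • (sinc ∘ fun x => lam * Real.sinh x) s := by
    intro s hsmem
    rw [Set.uIoc_of_le hu.le] at hsmem
    have hsh : 0 < Real.sinh s := Real.sinh_pos_iff.2 hsmem.1
    have hne : lam * Real.sinh s ≠ 0 := by positivity
    simp only [Function.comp, smul_eq_mul]
    rw [sinc_eq hne]
    field_simp
  rw [intervalIntegral.integral_congr_ae (ae_of_all _ hcongr)]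
  rw [intervalIntegral.integral_comp_smul_deriv
    (fun x _ => (Real.hasDerivAt_sinh x).const_mul lam)
    ((continuous_const.mul Real.continuous_cosh).continuousOn) continuous_sinc]
  simp only [Real.sinh_zero, mul_zero]
  rfl

lemma intervalIntegrable_main {u : ℝ} (hu : 0 < u) {lam : ℝ} (hlam : 0 < lam) :
    IntervalIntegrable
      (fun s => Real.sin (lam * Real.sinh s) * (Real.cosh s / Real.sinh s)) volume 0 u := by
  rw [intervalIntegrable_iff_integrableOn_Ioc_of_le hu.le]
  have hcont : Continuous fun s : ℝ => (lam * Real.cosh s) * sinc (lam * Real.sinh s) :=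
    (continuous_const.mul Real.continuous_cosh).mul
      (continuous_sinc.comp (continuous_const.mul Real.continuous_sinh))
  refine (hcont.integrableOn_Ioc).congr_fun ?_ measurableSet_Ioc
  intro s hsmem
  have hsh : 0 < Real.sinh s := Real.sinh_pos_iff.2 hsmem.1
  have hne : lam * Real.sinh s ≠ 0 := by positivity
  show (lam * Real.cosh s) * sinc (lam * Real.sinh s)
      = Real.sin (lam * Real.sinh s) * (Real.cosh s / Real.sinh s)
  rw [sinc_eq hne]
  field_simp

lemma intervalIntegrable_rr_term {u : ℝ} (hu : 0 < u) (lam : ℝ) :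
    IntervalIntegrable (fun s => Real.sin (lam * Real.sinh s) * rr u s) volume 0 u := by
  rw [intervalIntegrable_iff_integrableOn_Ioc_of_le hu.le]
  have hIoc : IntegrableOn (rr u) (Ioc 0 u) := by
    have h := integrableOn_rr hu
    rw [IntegrableOn,
      Measure.restrict_congr_set (μ := volume) (Ioo_ae_eq_Ioc (a := (0:ℝ)) (b := u))] at h
    exact h
  refine hIoc.bdd_mul (c := 1) ?_ (ae_of_all _ fun x => by simpa using Real.abs_sin_le_one _)
  exact (Real.continuous_sin.comp (continuous_const.mul Real.continuous_sinh)).aestronglyMeasurable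

lemma integral_decomp {u : ℝ} (hu : 0 < u) {lam : ℝ} (hlam : 0 < lam) :
    ∫ s in (0:ℝ)..u,
        Real.sin (lam * Real.sinh s) / (Real.sinh s * Real.sqrt (Real.cosh u - Real.cosh s))
      = cC u * S (lam * Real.sinh u) + ∫ y : ℝ, Real.sin (lam * y) * rho u y := by
  have hsplit : ∀ s : ℝ,
      Real.sin (lam * Real.sinh s) / (Real.sinh s * Real.sqrt (Real.cosh u - Real.cosh s))
        = cC u * (Real.sin (lam * Real.sinh s) * (Real.cosh s / Real.sinh s))
          + Real.sin (lam * Real.sinh s) * rr u s := by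
    intro s
    rw [rr, div_eq_mul_inv]
    ring
  simp only [hsplit]
  rw [intervalIntegral.integral_add ((intervalIntegrable_main hu hlam).const_mul _)
    (intervalIntegrable_rr_term hu lam)]
  rw [intervalIntegral.integral_const_mul, integral_main_term hu hlam]
  congr 1
  rw [intervalIntegral.integral_of_le hu.le, MeasureTheory.integral_Ioc_eq_integral_Ioo,
    key_cov hu lam]

end SabrAux

open scoped FourierTransform
open MeasureTheory Filter Set intervalIntegral

/-- For fixed `u > 0`, the SABR payoff `g(u; σ₀)` tends to `(π/√2) cosh(u/2)` as
`σ₀ → ∞`. -/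
theorem sabrPayoff_tendsto_of_large_vol (u : ℝ) (hu : 0 < u) :
    Filter.Tendsto (fun σ₀ : ℝ => sabrPayoff σ₀ u) Filter.atTop
      (nhds (π / Real.sqrt 2 * Real.cosh (u / 2))) := by
  classical
  open SabrAux MeasureTheory Filter in
  have hsinhu : 0 < Real.sinh u := Real.sinh_pos_iff.2 hu
  -- limit of the main term
  have h1 : Tendsto (fun lam : ℝ => lam * Real.sinh u) atTop atTop :=
    Tendsto.atTop_mul_const hsinhu tendsto_id
  have h2 : Tendsto (fun lam : ℝ => cC u * S (lam * Real.sinh u)) atTop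
      (nhds (cC u * (π/2))) := tendsto_const_nhds.mul (tendsto_S.comp h1)
  have h3 : Tendsto (fun lam : ℝ => ∫ y : ℝ, Real.sin (lam * y) * rho u y) atTop
      (nhds 0) := tendsto_integral_sin_mul (rho u) (integrable_rho hu)
  have h4 : Tendsto
      (fun lam : ℝ => cC u * S (lam * Real.sinh u) + ∫ y : ℝ, Real.sin (lam * y) * rho u y)
      atTop (nhds (cC u * (π/2) + 0)) := h2.add h3
  have h5 : Tendsto (fun σ₀ : ℝ => σ₀/2) atTop atTop :=
    tendsto_id.atTop_div_const two_pos
  have h6 : Tendsto (fun σ₀ : ℝ => Real.sinh u *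
      (cC u * S ((σ₀/2) * Real.sinh u) + ∫ y : ℝ, Real.sin ((σ₀/2) * y) * rho u y))
      atTop (nhds (Real.sinh u * (cC u * (π/2) + 0))) :=
    tendsto_const_nhds.mul (h4.comp h5)
  -- value identification
  have hs2 : 0 < Real.sinh (u/2) := Real.sinh_pos_iff.2 (by linarith)
  have hcoshm1 : Real.cosh u - 1 = 2 * Real.sinh (u/2)^2 := by
    have hh := Real.cosh_two_mul (u/2)
    rw [show 2*(u/2) = u by ring] at hh
    have h2' := Real.cosh_sq (u/2)
    nlinarith [hh, h2']
  have hsqrt : Real.sqrt (Real.cosh u - 1) = Real.sqrt 2 * Real.sinh (u/2) := by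
    rw [hcoshm1, show (2:ℝ) * Real.sinh (u/2)^2 = 2 * Real.sinh (u/2)^2 from rfl,
      Real.sqrt_mul (by norm_num : (0:ℝ) ≤ 2), Real.sqrt_sq hs2.le]
  have hsinh2 : Real.sinh u = 2 * Real.sinh (u/2) * Real.cosh (u/2) := by
    have hh := Real.sinh_two_mul (u/2)
    rw [show 2*(u/2) = u by ring] at hh
    exact hh
  have hval : Real.sinh u * (cC u * (π/2) + 0) = π / Real.sqrt 2 * Real.cosh (u/2) := by
    rw [add_zero, cC, hsqrt, hsinh2]
    have hsqrt2 : Real.sqrt 2 ≠ 0 := by positivity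
    field_simp
  rw [← hval]
  refine h6.congr' ?_
  filter_upwards [eventually_gt_atTop (0:ℝ)] with σ₀ hσ₀
  have hlam : 0 < σ₀/2 := by linarith
  rw [sabrPayoff]
  rw [integral_decomp hu hlam]
end
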